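/- arXiv:0804.4014 — 3 statements merged into one kernel-verified Lean document; each statement's English description precedes it below -/
import Mathlib

section
/- Let b₁,...,bₙ ∈ ℝ^m be an LLL-reduced basis of the lattice L, let 1 ≤ k ≤ n, and let d₁,...,d_k be arbitrary linearly independent vectors in L. Then ‖b₁‖ ≤ 2^{(n−k)/2 + (k−1)/4} · (det L(d₁,...,d_k))^{1/k}. -/
open scoped BigOperators RealInnerProductSpace

/-- The Gram–Schmidt orthogonalization `b₁*, …, bₙ*` of the vectors `b₁, …, bₙ`:
`bᵢ* = bᵢ - ∑_{j<i} μᵢⱼ bⱼ*`. -/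
noncomputable def gso {m n : ℕ} (b : Fin n → EuclideanSpace ℝ (Fin m)) :
    Fin n → EuclideanSpace ℝ (Fin m) :=
  haveI : WellFoundedLT (Fin n) := inferInstance
  InnerProductSpace.gramSchmidt ℝ b

/-- The Gram–Schmidt coefficient `μᵢⱼ = ⟨bᵢ, bⱼ*⟩ / ⟨bⱼ*, bⱼ*⟩`. -/
noncomputable def mu {m n : ℕ} (b : Fin n → EuclideanSpace ℝ (Fin m)) (i j : Fin n) : ℝ :=
  ⟪b i, gso b j⟫ / ⟪gso b j, gso b j⟫

/-- `b₁, …, bₙ` is LLL-reduced: `|μⱼᵢ| ≤ 1/2` for `i < j`, and the exchange condition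
`‖bⱼ* + μ_{j,j-1} b_{j-1}*‖² ≥ (3/4) ‖b_{j-1}*‖²` for consecutive indices `i + 1 = j`. -/
def LLLReduced {m n : ℕ} (b : Fin n → EuclideanSpace ℝ (Fin m)) : Prop :=
  (∀ i j : Fin n, i < j → |mu b j i| ≤ 1 / 2) ∧
  (∀ i j : Fin n, (i : ℕ) + 1 = (j : ℕ) →
    (3 / 4 : ℝ) * ‖gso b i‖ ^ 2 ≤ ‖gso b j + mu b j i • gso b i‖ ^ 2)

/-- Membership in the lattice generated by `b₁, …, bₙ`: an integer linear combination. -/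
def inLattice {m n : ℕ} (b : Fin n → EuclideanSpace ℝ (Fin m))
    (x : EuclideanSpace ℝ (Fin m)) : Prop :=
  ∃ c : Fin n → ℤ, x = ∑ i, (c i : ℝ) • b i

/-- The determinant of the lattice generated by `d₁, …, d_k`:
`√(det DᵀD)`, i.e. the square root of the Gram determinant. -/
noncomputable def latticeDet {m k : ℕ} (d : Fin k → EuclideanSpace ℝ (Fin m)) : ℝ :=
  Real.sqrt (Matrix.det (Matrix.of fun i j => ⟪d i, d j⟫))

open Finset
open InnerProductSpace
instance (k : ℕ) : WellFoundedLT (Fin k) := inferInstance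
set_option maxHeartbeats 1000000

lemma gso_eq {m n : ℕ} (b : Fin n → EuclideanSpace ℝ (Fin m)) : gso b = gramSchmidt ℝ b := rfl

lemma gso_zero {m n : ℕ} (hn : 0 < n) (b : Fin n → EuclideanSpace ℝ (Fin m)) :
    gso b ⟨0, hn⟩ = b ⟨0, hn⟩ := by
  rw [gso_eq, gramSchmidt_def]
  have : Finset.Iio (⟨0, hn⟩ : Fin n) = ∅ := by
    ext x; simp [Fin.lt_def]
  rw [this]
  simp

lemma gso_sq_lower {m n : ℕ} (hn : 0 < n) (b : Fin n → EuclideanSpace ℝ (Fin m))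
    (hred : LLLReduced b) (i : Fin n) :
    ‖b ⟨0, hn⟩‖ ^ 2 ≤ 2 ^ (i : ℕ) * ‖gso b i‖ ^ 2 := by
  obtain ⟨iv, hiv⟩ := i
  induction iv with
  | zero =>
    rw [gso_zero hn b]; norm_num
  | succ p ih =>
    simp only [Fin.val_mk] at ih ⊢
    have hp : p < n := by omega
    have step : (1/2 : ℝ) * ‖gso b ⟨p, hp⟩‖ ^ 2 ≤ ‖gso b ⟨p+1, hiv⟩‖ ^ 2 := by
      have hex := hred.2 ⟨p, hp⟩ ⟨p+1, hiv⟩ rfl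
      set μ := mu b ⟨p+1, hiv⟩ ⟨p, hp⟩ with hμ
      have hμle : |μ| ≤ 1/2 := hred.1 ⟨p, hp⟩ ⟨p+1, hiv⟩ (by simp [Fin.lt_def])
      have hμsq : μ ^ 2 ≤ 1/4 := by
        have := sq_le_sq' (neg_le_of_abs_le hμle) (le_of_abs_le hμle)
        norm_num at this ⊢
        linarith
      have horth : ⟪gso b ⟨p+1, hiv⟩, μ • gso b ⟨p, hp⟩⟫ = 0 := by
        rw [real_inner_smul_right, gso_eq,
          gramSchmidt_orthogonal ℝ b (by simp [Fin.ext_iff] : (⟨p+1, hiv⟩ : Fin n) ≠ ⟨p, hp⟩)]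
        ring
      have hexpand : ‖gso b ⟨p+1, hiv⟩ + μ • gso b ⟨p, hp⟩‖ ^ 2
          = ‖gso b ⟨p+1, hiv⟩‖ ^ 2 + μ ^ 2 * ‖gso b ⟨p, hp⟩‖ ^ 2 := by
        rw [norm_add_sq_real, horth]
        rw [norm_smul]
        simp only [mul_pow, Real.norm_eq_abs, sq_abs, mul_zero, add_zero]
      rw [hexpand] at hex
      nlinarith [sq_nonneg ‖gso b ⟨p, hp⟩‖]
    have ihp := ih hp
    have h2 : (0:ℝ) < 2 ^ p := by positivity
    calc ‖b ⟨0, hn⟩‖ ^ 2 ≤ 2 ^ p * ‖gso b ⟨p, hp⟩‖ ^ 2 := ihp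
      _ ≤ 2 ^ p * (2 * ‖gso b ⟨p+1, hiv⟩‖ ^ 2) := by
          apply mul_le_mul_of_nonneg_left _ (le_of_lt h2)
          linarith
      _ = 2 ^ (p+1) * ‖gso b ⟨p+1, hiv⟩‖ ^ 2 := by ring
variable {m k : ℕ}
local notation "E" => EuclideanSpace ℝ (Fin m)

/-- expansion of f in terms of its Gram-Schmidt vectors with unitriangular coefficients -/
noncomputable def gsCoeff (f : Fin k → E) : Matrix (Fin k) (Fin k) ℝ :=
  fun i j => if i = j then 1 else if i < j then ⟪gramSchmidt ℝ f i, f j⟫ / (‖gramSchmidt ℝ f i‖:ℝ)^2 else 0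

lemma gsCoeff_expand (f : Fin k → E) (j : Fin k) :
    f j = ∑ i, gsCoeff f i j • gramSchmidt ℝ f i := by
  have h := gramSchmidt_def'' ℝ f j
  rw [h]
  rw [← Finset.sum_subset (Finset.subset_univ (Finset.Iic j))]
  · rw [← Finset.Iio_insert, Finset.sum_insert (by simp)]
    congr 1
    · simp [gsCoeff]
    · apply Finset.sum_congr rfl
      intro i hi
      rw [Finset.mem_Iio] at hi
      simp [gsCoeff, hi, hi.ne]
  · intro i _ hi
    rw [Finset.mem_Iic, not_le] at hi
    simp [gsCoeff, hi.ne', not_lt_of_gt hi]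

lemma gram_det_eq_prod (f : Fin k → E) :
    (Matrix.of fun i j => ⟪f i, f j⟫).det = ∏ i, ‖gramSchmidt ℝ f i‖ ^ 2 := by
  classical
  set T : Matrix (Fin k) (Fin k) ℝ := gsCoeff f with hT
  have hGram : (Matrix.of fun i j => ⟪f i, f j⟫) =
      T.transpose * (Matrix.diagonal (fun i => ‖gramSchmidt ℝ f i‖ ^ 2) * T) := by
    ext a b
    rw [Matrix.mul_apply]
    simp only [Matrix.of_apply]
    conv_lhs => rw [gsCoeff_expand f a, gsCoeff_expand f b]
    rw [sum_inner]
    apply Finset.sum_congr rfl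
    intro i _
    rw [Matrix.transpose_apply, Matrix.diagonal_mul, real_inner_smul_left, inner_sum]
    rw [Finset.sum_eq_single i]
    · rw [real_inner_smul_right, real_inner_self_eq_norm_sq]; ring
    · intro x _ hx
      rw [real_inner_smul_right, gramSchmidt_orthogonal ℝ f (Ne.symm hx), mul_zero]
    · simp
  have hTtri : T.BlockTriangular id := by
    intro i j hij
    simp only [id_eq] at hij
    simp [hT, gsCoeff, hij.ne', not_lt_of_gt hij]
  have hdetT : T.det = 1 := by
    rw [Matrix.det_of_upperTriangular hTtri]
    apply Finset.prod_eq_one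
    intro i _
    simp [hT, gsCoeff]
  rw [hGram, Matrix.det_mul, Matrix.det_mul, Matrix.det_transpose, hdetT,
    Matrix.det_diagonal, one_mul, mul_one]

lemma inner_span_zero {m : ℕ} {S : Set (EuclideanSpace ℝ (Fin m))} {u : EuclideanSpace ℝ (Fin m)}
    (h : ∀ s ∈ S, ⟪s, u⟫ = 0) {x} (hx : x ∈ Submodule.span ℝ S) : ⟪x, u⟫ = 0 := by
  induction hx using Submodule.span_induction with
  | mem s hs => exact h s hs
  | zero => exact inner_zero_left u
  | add x y _ _ hx hy => rw [inner_add_left, hx, hy, add_zero]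
  | smul a x _ hx => rw [real_inner_smul_left, hx, mul_zero]

lemma inner_self_gramSchmidt {m n : ℕ} (b : Fin n → EuclideanSpace ℝ (Fin m)) (i : Fin n) :
    ⟪b i, gramSchmidt ℝ b i⟫ = ‖gramSchmidt ℝ b i‖ ^ 2 := by
  conv_lhs => rw [gramSchmidt_def'' ℝ b i]
  rw [inner_add_left, sum_inner, real_inner_self_eq_norm_sq, add_eq_left]
  apply Finset.sum_eq_zero
  intro p hp
  rw [real_inner_smul_left, gramSchmidt_orthogonal ℝ b (Finset.mem_Iio.mp hp).ne, mul_zero]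

lemma gs_lower_bound {m n k : ℕ} (b : Fin n → EuclideanSpace ℝ (Fin m))
    (hb : LinearIndependent ℝ b)
    (v : Fin k → Fin n → ℤ) (t : Fin k → Fin n) (ht : StrictMono t)
    (hv1 : ∀ j, v j (t j) ≠ 0) (hv2 : ∀ j i, t j < i → v j i = 0)
    (d' : Fin k → EuclideanSpace ℝ (Fin m))
    (hd' : ∀ j, d' j = ∑ i, (v j i : ℝ) • b i) (j : Fin k) :
    ‖gramSchmidt ℝ b (t j)‖ ≤ ‖gramSchmidt ℝ d' j‖ := by
  set u := gramSchmidt ℝ b (t j) with hu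
  -- inner products of the d' with u
  have hinner : ∀ p : Fin k, p ≤ j →
      ⟪d' p, u⟫ = (if p = j then (v j (t j) : ℝ) * ‖u‖ ^ 2 else 0) := by
    intro p hp
    rw [hd', sum_inner]
    have hterm : ∀ i : Fin n, (⟪((v p i : ℝ)) • b i, u⟫)
        = if p = j ∧ i = t j then (v j (t j) : ℝ) * ‖u‖ ^ 2 else 0 := by
      intro i
      rw [real_inner_smul_left]
      rcases lt_trichotomy i (t j) with hlt | heq | hgt
      · have hz : ⟪b i, u⟫ = 0 := by
          rw [hu, real_inner_comm]; exact gramSchmidt_inv_triangular ℝ b hlt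
        rw [hz, mul_zero, if_neg (by rintro ⟨-, rfl⟩; exact lt_irrefl _ hlt)]
      · subst heq
        rcases eq_or_lt_of_le hp with rfl | hpj
        · rw [if_pos ⟨rfl, rfl⟩, hu, inner_self_gramSchmidt]
        · have hz : v p (t j) = 0 := hv2 p (t j) (ht hpj)
          rw [hz, Int.cast_zero, zero_mul, if_neg (fun h => hpj.ne h.1)]
      · have h1 : v p i = 0 := hv2 p i (lt_of_le_of_lt (ht.monotone hp) hgt)
        rw [h1, Int.cast_zero, zero_mul, if_neg (fun h => hgt.ne' h.2)]
    rw [Finset.sum_congr rfl (fun i _ => hterm i)]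
    by_cases hpj : p = j
    · subst hpj
      rw [if_pos rfl]
      simp [Finset.sum_ite_eq']
    · rw [if_neg hpj]
      apply Finset.sum_eq_zero
      intro i _
      rw [if_neg (fun h => hpj h.1)]
  have hprojzero : ∀ p : Fin k, p < j → ⟪gramSchmidt ℝ d' p, u⟫ = 0 := by
    intro p hp
    have hmem := gramSchmidt_mem_span ℝ d' (le_refl p)
    apply inner_span_zero _ hmem
    rintro s ⟨q, hq, rfl⟩
    rw [Set.mem_Iic] at hq
    rw [hinner q (le_of_lt (lt_of_le_of_lt hq hp))]
    simp [(lt_of_le_of_lt hq hp).ne]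
  have hkey : ⟪gramSchmidt ℝ d' j, u⟫ = (v j (t j) : ℝ) * ‖u‖ ^ 2 := by
    rw [gramSchmidt_def ℝ d' j, inner_sub_left, sum_inner]
    have hz : ∀ p ∈ Finset.Iio j,
        ⟪((ℝ ∙ gramSchmidt ℝ d' p).starProjection (d' j)), u⟫ = 0 := by
      intro p hp
      rw [Finset.mem_Iio] at hp
      rw [Submodule.starProjection_singleton, real_inner_smul_left, hprojzero p hp, mul_zero]
    rw [Finset.sum_congr rfl hz, Finset.sum_const, smul_zero, sub_zero, hinner j le_rfl]
    simp
  have hune : u ≠ 0 := by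
    rw [hu]; exact gramSchmidt_ne_zero (t j) hb
  have hupos : 0 < ‖u‖ := norm_pos_iff.mpr hune
  have hcs : |⟪gramSchmidt ℝ d' j, u⟫| ≤ ‖gramSchmidt ℝ d' j‖ * ‖u‖ := abs_real_inner_le_norm _ _
  rw [hkey, abs_mul] at hcs
  have h1le : (1:ℝ) ≤ |(v j (t j) : ℝ)| := by
    rw [← Int.cast_abs]
    exact_mod_cast Int.one_le_abs (hv1 j)
  have habs : |‖u‖^2| = ‖u‖^2 := abs_of_nonneg (sq_nonneg _)
  rw [habs] at hcs
  nlinarith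


lemma range_snoc' {α : Type*} {k : ℕ} (f : Fin k → α) (x : α) :
    Set.range (Fin.snoc f x : Fin (k+1) → α) = insert x (Set.range f) := by
  ext y
  constructor
  · rintro ⟨i, rfl⟩
    induction i using Fin.lastCases with
    | last => rw [Fin.snoc_last]; exact Set.mem_insert _ _
    | cast i => rw [Fin.snoc_castSucc]; exact Set.mem_insert_of_mem _ ⟨i, rfl⟩
  · rintro (rfl | ⟨i, rfl⟩)
    · exact ⟨Fin.last k, Fin.snoc_last _ _⟩
    · exact ⟨i.castSucc, Fin.snoc_castSucc _ _ _⟩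

lemma strictMono_snoc {k n : ℕ} (t : Fin k → Fin n) (x : Fin n) (ht : StrictMono t)
    (hx : ∀ j, t j < x) : StrictMono (Fin.snoc t x : Fin (k+1) → Fin n) := by
  intro a b hab
  induction b using Fin.lastCases with
  | last =>
    induction a using Fin.lastCases with
    | last => exact absurd hab (lt_irrefl _)
    | cast a => rw [Fin.snoc_castSucc, Fin.snoc_last]; exact hx a
  | cast b =>
    induction a using Fin.lastCases with
    | last => exact absurd hab (not_lt.mpr (Fin.castSucc_lt_last b).le)
    | cast a =>
      rw [Fin.snoc_castSucc, Fin.snoc_castSucc]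
      exact ht (Fin.castSucc_lt_castSucc_iff.mp hab)

lemma li_of_triangular {k n : ℕ} (v : Fin k → Fin n → ℤ) (t : Fin k → Fin n)
    (ht : StrictMono t) (hv1 : ∀ j, v j (t j) ≠ 0) (hv2 : ∀ j i, t j < i → v j i = 0) :
    LinearIndependent ℤ v := by
  classical
  rw [Fintype.linearIndependent_iff]
  intro z hz
  by_contra hne
  push_neg at hne
  obtain ⟨q0, hq0⟩ := hne
  set T := Finset.univ.filter fun q => z q ≠ 0 with hT
  have hTn : T.Nonempty := ⟨q0, by simp [hT, hq0]⟩
  set qm := T.max' hTn with hqm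
  have hqmT : qm ∈ T := T.max'_mem hTn
  have hzqm : z qm ≠ 0 := by
    have := Finset.mem_filter.mp hqmT; exact this.2
  have heval := congrFun hz (t qm)
  rw [Finset.sum_apply] at heval
  simp only [Pi.smul_apply, smul_eq_mul, Pi.zero_apply] at heval
  rw [Finset.sum_eq_single qm] at heval
  · exact hzqm (by
      rcases mul_eq_zero.mp heval with h | h
      · exact h
      · exact absurd h (hv1 qm))
  · intro q _ hq
    by_cases hzq : z q = 0
    · rw [hzq, zero_mul]
    · have hqT : q ∈ T := Finset.mem_filter.mpr ⟨Finset.mem_univ _, hzq⟩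
      have hlt : q < qm := lt_of_le_of_ne (T.le_max' q hqT) hq
      rw [hv2 q (t qm) (ht hlt), mul_zero]
  · intro h
    exact absurd (Finset.mem_univ qm) h

lemma hnf_aux {n kk : ℕ}
    (IH : ∀ c : Fin kk → Fin n → ℤ, LinearIndependent ℤ c →
      ∃ (v : Fin kk → Fin n → ℤ) (t : Fin kk → Fin n),
        Submodule.span ℤ (Set.range v) = Submodule.span ℤ (Set.range c) ∧
        StrictMono t ∧ (∀ j, v j (t j) ≠ 0) ∧ (∀ j i, t j < i → v j i = 0))
    (t' : Fin n) :
    ∀ (s : ℕ) (c : Fin (kk+1) → Fin n → ℤ), LinearIndependent ℤ c →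
      (∀ p i, t' < i → c p i = 0) → (∃ p, c p t' ≠ 0) →
      (Finset.univ.filter fun p => c p t' ≠ 0).card ≤ s →
      ∃ (v : Fin (kk+1) → Fin n → ℤ) (t : Fin (kk+1) → Fin n),
        Submodule.span ℤ (Set.range v) = Submodule.span ℤ (Set.range c) ∧
        StrictMono t ∧ (∀ j, v j (t j) ≠ 0) ∧ (∀ j i, t j < i → v j i = 0) := by
  classical
  intro s
  induction s with
  | zero =>
    intro c _ _ hex hcard
    exfalso
    obtain ⟨p, hp⟩ := hex
    have : p ∈ Finset.univ.filter fun p => c p t' ≠ 0 := Finset.mem_filter.mpr ⟨mem_univ _, hp⟩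
    have := Finset.card_pos.mpr ⟨p, this⟩
    omega
  | succ s ihs =>
    intro c hc htop hex hcard
    set T := Finset.univ.filter fun p => c p t' ≠ 0 with hTdef
    by_cases hone : T.card ≤ 1
    · -- single nonzero coordinate at t'
      obtain ⟨p, hp⟩ := hex
      have hpT : p ∈ T := Finset.mem_filter.mpr ⟨mem_univ _, hp⟩
      have huniq : ∀ q, q ≠ p → c q t' = 0 := by
        intro q hq
        by_contra hqe
        have hqT : q ∈ T := Finset.mem_filter.mpr ⟨mem_univ _, hqe⟩
        have : ({q, p} : Finset (Fin (kk+1))).card ≤ T.card :=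
          Finset.card_le_card (by intro r hr; rcases Finset.mem_insert.mp hr with rfl | hr
                                  · exact hqT
                                  · rw [Finset.mem_singleton.mp hr]; exact hpT)
        rw [Finset.card_insert_of_notMem (by simpa using hq), Finset.card_singleton] at this
        omega
      set σ : Equiv.Perm (Fin (kk+1)) := Equiv.swap p (Fin.last kk) with hσ
      have hσlast : σ (Fin.last kk) = p := Equiv.swap_apply_right _ _
      have hσne : ∀ j : Fin kk, σ j.castSucc ≠ p := by
        intro j h
        rw [← hσlast] at h
        have := σ.injective h
        exact absurd this.symm (Fin.castSucc_lt_last j).ne'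
      set cc : Fin kk → Fin n → ℤ := c ∘ (fun j : Fin kk => σ j.castSucc) with hcc
      have hccli : LinearIndependent ℤ cc :=
        hc.comp (fun j : Fin kk => σ j.castSucc)
          (fun a b hab => Fin.castSucc_injective _ (σ.injective hab))
      obtain ⟨v', t'', hsp', ht'', h1', h2'⟩ := IH cc hccli
      have hcczero : ∀ j i, t' ≤ i → cc j i = 0 := by
        intro j i hi
        rcases eq_or_lt_of_le hi with rfl | hlt
        · exact huniq _ (hσne j)
        · exact htop _ i hlt
      have hv'zero : ∀ j i, t' ≤ i → v' j i = 0 := by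
        intro j i hi
        have hmem : v' j ∈ Submodule.span ℤ (Set.range cc) := by
          rw [← hsp']; exact Submodule.subset_span ⟨j, rfl⟩
        have hle : Submodule.span ℤ (Set.range cc) ≤
            LinearMap.ker (LinearMap.proj (R := ℤ) (φ := fun _ : Fin n => ℤ) i) := by
          rw [Submodule.span_le]
          rintro x ⟨q, rfl⟩
          exact hcczero q i hi
        exact hle hmem
      have hvt : ∀ j, t'' j < t' := by
        intro j
        by_contra hjt
        exact h1' j (hv'zero j (t'' j) (not_lt.mp hjt))
      refine ⟨Fin.snoc v' (c p), Fin.snoc t'' t', ?_, strictMono_snoc _ _ ht'' hvt, ?_, ?_⟩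
      · have hrc : Set.range c = insert (c p) (Set.range cc) := by
          have h1 : c ∘ σ = Fin.snoc cc (c p) := by
            funext q
            induction q using Fin.lastCases with
            | last => rw [Function.comp_apply, hσlast, Fin.snoc_last]
            | cast q => rw [Function.comp_apply, Fin.snoc_castSucc]; rfl
          rw [← σ.surjective.range_comp c, h1, range_snoc']
        rw [range_snoc', hrc, Submodule.span_insert, Submodule.span_insert, hsp']
      · intro j
        induction j using Fin.lastCases with
        | last => rw [Fin.snoc_last, Fin.snoc_last]; exact hp
        | cast j => rw [Fin.snoc_castSucc, Fin.snoc_castSucc]; exact h1' j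
      · intro j i
        induction j using Fin.lastCases with
        | last => rw [Fin.snoc_last, Fin.snoc_last]; exact htop p i
        | cast j => rw [Fin.snoc_castSucc, Fin.snoc_castSucc]; exact h2' j i
    · -- at least two nonzero coordinates at t' : Bezout step
      rw [not_le] at hone
      obtain ⟨p₀, hp₀T, p₁, hp₁T, hne01⟩ := Finset.one_lt_card.mp hone
      have ha : c p₀ t' ≠ 0 := (Finset.mem_filter.mp hp₀T).2
      have hb : c p₁ t' ≠ 0 := (Finset.mem_filter.mp hp₁T).2
      set G : ℤ := (Int.gcd (c p₀ t') (c p₁ t') : ℤ) with hGdef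
      have hG : G ≠ 0 := by
        simp only [hGdef, ne_eq, Int.natCast_eq_zero]
        rw [Int.gcd_eq_zero_iff]
        rintro ⟨h1, -⟩
        exact ha h1
      set x : ℤ := Int.gcdA (c p₀ t') (c p₁ t') with hx
      set y : ℤ := Int.gcdB (c p₀ t') (c p₁ t') with hy
      have hbez : G = c p₀ t' * x + c p₁ t' * y := Int.gcd_eq_gcd_ab _ _
      obtain ⟨qa, hqa⟩ : G ∣ c p₀ t' := Int.gcd_dvd_left _ _
      obtain ⟨qb, hqb⟩ : G ∣ c p₁ t' := Int.gcd_dvd_right _ _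
      have hone1 : qa * x + qb * y = 1 := by
        apply mul_left_cancel₀ hG
        rw [mul_one]
        linear_combination -hbez - x * hqa - y * hqb
      set c' : Fin (kk+1) → Fin n → ℤ := fun r =>
        if r = p₀ then (fun i => x * c p₀ i + y * c p₁ i)
        else if r = p₁ then (fun i => qa * c p₁ i - qb * c p₀ i)
        else c r with hc'def
      have hc'p0 : c' p₀ = fun i => x * c p₀ i + y * c p₁ i := by simp [hc'def]
      have hc'p1 : c' p₁ = fun i => qa * c p₁ i - qb * c p₀ i := by
        simp [hc'def, Ne.symm hne01]
      have hc'other : ∀ r, r ≠ p₀ → r ≠ p₁ → c' r = c r := by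
        intro r h0 h1; simp [hc'def, h0, h1]
      have hval0 : c' p₀ t' = G := by
        rw [hc'p0]
        show x * c p₀ t' + y * c p₁ t' = G
        linear_combination -hbez
      have hval1 : c' p₁ t' = 0 := by
        rw [hc'p1]
        show qa * c p₁ t' - qb * c p₀ t' = 0
        linear_combination qa * hqb - qb * hqa
      -- linear independence of c'
      have hli' : LinearIndependent ℤ c' := by
        rw [Fintype.linearIndependent_iff]
        intro z hz
        set w : Fin (kk+1) → ℤ := fun r =>
          if r = p₀ then z p₀ * x - z p₁ * qb
          else if r = p₁ then z p₀ * y + z p₁ * qa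
          else z r with hwdef
        have hw0 : w p₀ = z p₀ * x - z p₁ * qb := by simp [hwdef]
        have hw1 : w p₁ = z p₀ * y + z p₁ * qa := by simp [hwdef, Ne.symm hne01]
        have hsum : ∑ r, w r • c r = 0 := by
          rw [← hz]
          have hp₁mem : p₁ ∈ Finset.univ.erase p₀ :=
            Finset.mem_erase.mpr ⟨hne01.symm, mem_univ _⟩
          rw [← Finset.add_sum_erase _ (fun r => w r • c r) (mem_univ p₀),
              ← Finset.add_sum_erase _ (fun r => w r • c r) hp₁mem,
              ← Finset.add_sum_erase _ (fun r => z r • c' r) (mem_univ p₀),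
              ← Finset.add_sum_erase _ (fun r => z r • c' r) hp₁mem]
          have hrest : ∑ r ∈ (Finset.univ.erase p₀).erase p₁, w r • c r
              = ∑ r ∈ (Finset.univ.erase p₀).erase p₁, z r • c' r := by
            apply Finset.sum_congr rfl
            intro r hr
            have h1 := (Finset.mem_erase.mp hr).1
            have h0 := (Finset.mem_erase.mp (Finset.mem_erase.mp hr).2).1
            rw [hc'other r h0 h1]
            have hwr : w r = z r := by simp [hwdef, h0, h1]
            rw [hwr]
          rw [hrest]
          rw [hw0, hw1, hc'p0, hc'p1]
          funext i
          simp only [Pi.add_apply, Pi.smul_apply, smul_eq_mul]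
          ring
        have hwzero := Fintype.linearIndependent_iff.mp hc w hsum
        have e1 : z p₀ * x - z p₁ * qb = 0 := by rw [← hw0]; exact hwzero p₀
        have e2 : z p₀ * y + z p₁ * qa = 0 := by rw [← hw1]; exact hwzero p₁
        intro r
        by_cases h0 : r = p₀
        · rw [h0]
          linear_combination qa * e1 + qb * e2 - z p₀ * hone1
        · by_cases h1 : r = p₁
          · rw [h1]
            linear_combination x * e2 - y * e1 - z p₁ * hone1
          · have := hwzero r
            rwa [show w r = z r from by simp [hwdef, h0, h1]] at this
      -- span preserved
      have hmem0 : c' p₀ ∈ Submodule.span ℤ (Set.range c) := by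
        rw [hc'p0]
        have hf : (fun i => x * c p₀ i + y * c p₁ i) = x • c p₀ + y • c p₁ := by
          funext i; simp [smul_eq_mul]
        rw [hf]
        exact Submodule.add_mem _
          (Submodule.smul_mem _ _ (Submodule.subset_span ⟨p₀, rfl⟩))
          (Submodule.smul_mem _ _ (Submodule.subset_span ⟨p₁, rfl⟩))
      have hmem1 : c' p₁ ∈ Submodule.span ℤ (Set.range c) := by
        rw [hc'p1]
        have hf : (fun i => qa * c p₁ i - qb * c p₀ i) = qa • c p₁ - qb • c p₀ := by
          funext i; simp [smul_eq_mul]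
        rw [hf]
        exact Submodule.sub_mem _
          (Submodule.smul_mem _ _ (Submodule.subset_span ⟨p₁, rfl⟩))
          (Submodule.smul_mem _ _ (Submodule.subset_span ⟨p₀, rfl⟩))
      have hmem0' : c p₀ ∈ Submodule.span ℤ (Set.range c') := by
        have hrepr : c p₀ = qa • c' p₀ - y • c' p₁ := by
          funext i
          simp only [Pi.sub_apply, Pi.smul_apply, smul_eq_mul, hc'p0, hc'p1]
          linear_combination (-(c p₀ i)) * hone1
        rw [hrepr]
        exact Submodule.sub_mem _
          (Submodule.smul_mem _ _ (Submodule.subset_span ⟨p₀, rfl⟩))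
          (Submodule.smul_mem _ _ (Submodule.subset_span ⟨p₁, rfl⟩))
      have hmem1' : c p₁ ∈ Submodule.span ℤ (Set.range c') := by
        have hrepr : c p₁ = qb • c' p₀ + x • c' p₁ := by
          funext i
          simp only [Pi.add_apply, Pi.smul_apply, smul_eq_mul, hc'p0, hc'p1]
          linear_combination (-(c p₁ i)) * hone1
        rw [hrepr]
        exact Submodule.add_mem _
          (Submodule.smul_mem _ _ (Submodule.subset_span ⟨p₀, rfl⟩))
          (Submodule.smul_mem _ _ (Submodule.subset_span ⟨p₁, rfl⟩))
      have hspan' : Submodule.span ℤ (Set.range c') = Submodule.span ℤ (Set.range c) := by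
        apply le_antisymm
        · rw [Submodule.span_le]
          rintro _ ⟨r, rfl⟩
          by_cases h0 : r = p₀
          · rw [h0]; exact hmem0
          · by_cases h1 : r = p₁
            · rw [h1]; exact hmem1
            · rw [hc'other r h0 h1]
              exact Submodule.subset_span ⟨r, rfl⟩
        · rw [Submodule.span_le]
          rintro _ ⟨r, rfl⟩
          by_cases h0 : r = p₀
          · rw [h0]; exact hmem0'
          · by_cases h1 : r = p₁
            · rw [h1]; exact hmem1'
            · rw [← hc'other r h0 h1]
              exact Submodule.subset_span ⟨r, rfl⟩
      -- hypotheses for recursion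
      have htop' : ∀ p i, t' < i → c' p i = 0 := by
        intro pp i hi
        have hz0 := htop p₀ i hi
        have hz1 := htop p₁ i hi
        by_cases h0 : pp = p₀
        · rw [h0, hc'p0]; show x * c p₀ i + y * c p₁ i = 0; rw [hz0, hz1]; ring
        · by_cases h1 : pp = p₁
          · rw [h1, hc'p1]; show qa * c p₁ i - qb * c p₀ i = 0; rw [hz0, hz1]; ring
          · rw [hc'other pp h0 h1]; exact htop pp i hi
      have hex' : ∃ p, c' p t' ≠ 0 := ⟨p₀, by rw [hval0]; exact hG⟩
      have hcard' : (Finset.univ.filter fun p => c' p t' ≠ 0).card ≤ s := by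
        have hsub : (Finset.univ.filter fun p => c' p t' ≠ 0) ⊆ T.erase p₁ := by
          intro r hr
          have hrne : c' r t' ≠ 0 := (Finset.mem_filter.mp hr).2
          rw [Finset.mem_erase]
          constructor
          · rintro rfl; exact hrne hval1
          · by_cases h0 : r = p₀
            · rw [h0]; exact hp₀T
            · by_cases h1 : r = p₁
              · rw [h1] at hrne; exact absurd hval1 hrne
              · rw [hc'other r h0 h1] at hrne
                exact Finset.mem_filter.mpr ⟨mem_univ _, hrne⟩
        have := Finset.card_le_card hsub
        rw [Finset.card_erase_of_mem hp₁T] at this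
        omega
      obtain ⟨v, t, hsp, ht, h1, h2⟩ := ihs c' hli' htop' hex' hcard'
      exact ⟨v, t, by rw [hsp, hspan'], ht, h1, h2⟩

lemma hnf {n : ℕ} : ∀ (k : ℕ) (c : Fin k → Fin n → ℤ), LinearIndependent ℤ c →
    ∃ (v : Fin k → Fin n → ℤ) (t : Fin k → Fin n),
      Submodule.span ℤ (Set.range v) = Submodule.span ℤ (Set.range c) ∧
      StrictMono t ∧ (∀ j, v j (t j) ≠ 0) ∧ (∀ j i, t j < i → v j i = 0) := by
  classical
  intro k
  induction k with
  | zero =>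
    intro c _
    exact ⟨c, Fin.elim0, rfl, fun a => a.elim0, fun j => j.elim0, fun j => j.elim0⟩
  | succ kk IH =>
    intro c hc
    have hc0 : c 0 ≠ 0 := hc.ne_zero 0
    obtain ⟨j0, hj0⟩ := Function.ne_iff.mp hc0
    set S := Finset.univ.filter (fun j : Fin n => ∃ p, c p j ≠ 0) with hSdef
    have hS : S.Nonempty := ⟨j0, Finset.mem_filter.mpr ⟨mem_univ _, ⟨0, hj0⟩⟩⟩
    set tm := S.max' hS with htm
    have htop : ∀ p i, tm < i → c p i = 0 := by
      intro p i hi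
      by_contra hne
      have : i ∈ S := Finset.mem_filter.mpr ⟨mem_univ _, ⟨p, hne⟩⟩
      exact absurd (S.le_max' i this) (not_le.mpr hi)
    have hex : ∃ p, c p tm ≠ 0 := (Finset.mem_filter.mp (S.max'_mem hS)).2
    exact hnf_aux IH tm _ c hc htop hex le_rfl

theorem norm_b1_le_sublattice_det {m n k : ℕ} (hk1 : 1 ≤ k) (hkn : k ≤ n)
    (b : Fin n → EuclideanSpace ℝ (Fin m))
    (hb : LinearIndependent ℝ b) (hred : LLLReduced b)
    (d : Fin k → EuclideanSpace ℝ (Fin m))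
    (hd : LinearIndependent ℝ d) (hdL : ∀ i, inLattice b (d i)) :
    ‖b ⟨0, by omega⟩‖ ≤
      2 ^ ((((n : ℝ) - k) / 2) + (((k : ℝ) - 1) / 4)) * latticeDet d ^ ((1 : ℝ) / k) := by
  classical
  have hn : 0 < n := lt_of_lt_of_le hk1 hkn
  choose c hc using hdL
  -- ℤ-linear independence of the coefficient vectors
  have hcli : LinearIndependent ℤ c := by
    rw [Fintype.linearIndependent_iff]
    intro z hz
    have hz' : ∀ jj : Fin n, (∑ i, z i * c i jj) = 0 := by
      intro jj
      have := congrFun hz jj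
      simpa using this
    have hzero : ∑ i, (z i : ℝ) • d i = 0 := by
      have h1 : ∑ i, (z i : ℝ) • d i = ∑ jj, ((∑ i, z i * c i jj : ℤ) : ℝ) • b jj := by
        calc ∑ i, (z i : ℝ) • d i = ∑ i, ∑ jj, ((z i * c i jj : ℤ) : ℝ) • b jj := by
              apply Finset.sum_congr rfl
              intro i _
              rw [hc i, Finset.smul_sum]
              apply Finset.sum_congr rfl
              intro jj _
              rw [smul_smul]
              push_cast
              ring_nf
          _ = ∑ jj, ∑ i, ((z i * c i jj : ℤ) : ℝ) • b jj := Finset.sum_comm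
          _ = ∑ jj, ((∑ i, z i * c i jj : ℤ) : ℝ) • b jj := by
              apply Finset.sum_congr rfl
              intro jj _
              rw [← Finset.sum_smul]
              norm_cast
      rw [h1]
      apply Finset.sum_eq_zero
      intro jj _
      rw [hz' jj]
      simp
    have hzzero := Fintype.linearIndependent_iff.mp hd _ hzero
    intro i
    exact_mod_cast hzzero i
  obtain ⟨v, t, hspan, ht, hv1, hv2⟩ := hnf k c hcli
  have hvli : LinearIndependent ℤ v := li_of_triangular v t ht hv1 hv2
  -- change-of-basis matrices
  have hvc : ∀ j, v j ∈ Submodule.span ℤ (Set.range c) := fun j => by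
    rw [← hspan]; exact Submodule.subset_span ⟨j, rfl⟩
  have hcv : ∀ p, c p ∈ Submodule.span ℤ (Set.range v) := fun p => by
    rw [hspan]; exact Submodule.subset_span ⟨p, rfl⟩
  choose A hA using fun j => (Submodule.mem_span_range_iff_exists_fun ℤ).mp (hvc j)
  choose B hB using fun p => (Submodule.mem_span_range_iff_exists_fun ℤ).mp (hcv p)
  have key : ∀ j q, (∑ p, A j p * B p q) = if j = q then (1:ℤ) else 0 := by
    intro j
    have hrepr : ∑ q, (∑ p, A j p * B p q) • v q = v j := by
      calc ∑ q, (∑ p, A j p * B p q) • v q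
          = ∑ q, ∑ p, A j p • (B p q • v q) := by
            apply Finset.sum_congr rfl
            intro q _
            rw [Finset.sum_smul]
            apply Finset.sum_congr rfl
            intro p _
            rw [smul_smul]
        _ = ∑ p, A j p • (∑ q, B p q • v q) := by
            rw [Finset.sum_comm]
            apply Finset.sum_congr rfl
            intro p _
            rw [Finset.smul_sum]
        _ = ∑ p, A j p • c p := by
            apply Finset.sum_congr rfl
            intro p _
            rw [hB p]
        _ = v j := hA j
    have hid : ∑ q, (if j = q then (1:ℤ) else 0) • v q = v j := by
      rw [Finset.sum_eq_single j]
      · rw [if_pos rfl, one_smul]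
      · intro q _ hq
        rw [if_neg (fun h => hq h.symm), zero_smul]
      · intro h; exact absurd (Finset.mem_univ j) h
    have hdiff : ∑ q, ((∑ p, A j p * B p q) - (if j = q then 1 else 0)) • v q = 0 := by
      simp only [sub_smul]
      rw [Finset.sum_sub_distrib, hrepr, hid, sub_self]
    intro q
    exact sub_eq_zero.mp (Fintype.linearIndependent_iff.mp hvli _ hdiff q)
  have hABmat : (Matrix.of A) * (Matrix.of B) = 1 := by
    ext j q
    rw [Matrix.mul_apply, Matrix.one_apply]
    simpa using key j q
  have hAdet := Int.isUnit_iff.mp (Matrix.isUnit_det_of_right_inverse hABmat)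
  -- the new family d' with the same Gram determinant
  set d' : Fin k → EuclideanSpace ℝ (Fin m) := fun j => ∑ i, ((v j i : ℝ)) • b i with hd'def
  have hd'd : ∀ j, d' j = ∑ p, ((A j p : ℝ)) • d p := by
    intro j
    have hvji : ∀ i, ((v j i : ℤ) : ℝ) = ∑ p, (A j p : ℝ) * (c p i : ℝ) := by
      intro i
      have h1 : v j i = ∑ p, A j p * c p i := by
        have h2 := congrFun (hA j) i
        simpa using h2.symm
      rw [h1]
      push_cast
      rfl
    calc d' j = ∑ i, (∑ p, (A j p:ℝ) * (c p i:ℝ)) • b i := by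
          rw [hd'def]
          apply Finset.sum_congr rfl
          intro i _
          rw [hvji i]
      _ = ∑ i, ∑ p, ((A j p:ℝ) * (c p i:ℝ)) • b i := by
          apply Finset.sum_congr rfl; intro i _; rw [Finset.sum_smul]
      _ = ∑ p, ∑ i, ((A j p:ℝ) * (c p i:ℝ)) • b i := Finset.sum_comm
      _ = ∑ p, (A j p:ℝ) • d p := by
          apply Finset.sum_congr rfl
          intro p _
          rw [hc p, Finset.smul_sum]
          apply Finset.sum_congr rfl
          intro i _
          rw [smul_smul]
  set G : Matrix (Fin k) (Fin k) ℝ := Matrix.of fun p q => ⟪d p, d q⟫ with hGdef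
  set G' : Matrix (Fin k) (Fin k) ℝ := Matrix.of fun p q => ⟪d' p, d' q⟫ with hG'def
  set Ar : Matrix (Fin k) (Fin k) ℝ := (Matrix.of A).map (Int.castRingHom ℝ) with hArdef
  have hGram : G' = Ar * G * Ar.transpose := by
    ext a b'
    have lhs : G' a b' = ∑ q, ∑ p, (A a p : ℝ) * ((A b' q : ℝ) * ⟪d p, d q⟫) := by
      rw [hG'def]
      show ⟪d' a, d' b'⟫ = _
      rw [hd'd a, hd'd b', sum_inner]
      simp_rw [real_inner_smul_left, inner_sum, real_inner_smul_right, Finset.mul_sum]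
      exact Finset.sum_comm
    rw [lhs, Matrix.mul_apply]
    apply Finset.sum_congr rfl
    intro q _
    rw [Matrix.mul_apply, Finset.sum_mul]
    apply Finset.sum_congr rfl
    intro p _
    rw [Matrix.transpose_apply]
    simp only [hArdef, Matrix.map_apply, Matrix.of_apply, hGdef, Int.coe_castRingHom]
    ring
  have hdet_eq : G'.det = G.det := by
    rw [hGram, Matrix.det_mul, Matrix.det_mul, Matrix.det_transpose]
    have hArdet : Ar.det = (((Matrix.of A).det : ℤ) : ℝ) := by
      rw [hArdef]
      exact (RingHom.map_det (Int.castRingHom ℝ) (Matrix.of A)).symm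
    rcases hAdet with h | h <;> rw [hArdet, h] <;> norm_num
  have hgs_lb := gs_lower_bound b hb v t ht hv1 hv2 d' (fun j => by rw [hd'def])
  have hgs_pos : ∀ j, 0 < ‖gramSchmidt ℝ d' j‖ := by
    intro j
    have h2 : gramSchmidt ℝ b (t j) ≠ 0 := gramSchmidt_ne_zero (t j) hb
    have h3 := norm_pos_iff.mpr h2
    linarith [hgs_lb j]
  have hG'val : G'.det = ∏ j, ‖gramSchmidt ℝ d' j‖ ^ 2 := by
    rw [hG'def]; exact gram_det_eq_prod d'
  have hdet_pos : 0 < G.det := by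
    rw [← hdet_eq, hG'val]
    exact Finset.prod_pos (fun j _ => pow_pos (hgs_pos j) 2)
  have hDpos : 0 < latticeDet d := by
    rw [latticeDet]
    exact Real.sqrt_pos.mpr hdet_pos
  have hD2 : latticeDet d ^ 2 = ∏ j, ‖gramSchmidt ℝ d' j‖ ^ 2 := by
    rw [latticeDet, Real.sq_sqrt hdet_pos.le, ← hdet_eq, hG'val]
  -- bound on the pivots
  have hmono : ∀ (dd : ℕ) (a b2 : Fin k), (b2:ℕ) = (a:ℕ) + dd → (t a : ℕ) + dd ≤ (t b2 : ℕ) := by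
    intro dd
    induction dd with
    | zero =>
      intro a b2 hab
      have : a = b2 := Fin.ext (by omega)
      rw [this]; omega
    | succ dd ih =>
      intro a b2 hab
      have hb2 : (a:ℕ) + dd < k := by omega
      have h1 := ih a ⟨(a:ℕ) + dd, hb2⟩ rfl
      have h2 : (⟨(a:ℕ) + dd, hb2⟩ : Fin k) < b2 := by rw [Fin.lt_def]; simp; omega
      have h3 := ht h2
      rw [Fin.lt_def] at h3
      simp at h1 h3
      omega
  have htj : ∀ j : Fin k, (t j : ℕ) ≤ n - k + (j:ℕ) := by
    intro j
    have hlast : (k - 1) < k := by omega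
    have h1 := hmono ((k-1) - (j:ℕ)) j ⟨k-1, hlast⟩ (by simp; omega)
    have h2 : (t ⟨k-1, hlast⟩ : ℕ) < n := (t _).isLt
    have hj : (j:ℕ) ≤ k - 1 := by have := j.isLt; omega
    omega
  -- the key product inequality
  have hstep : ∀ j : Fin k, ‖b ⟨0, hn⟩‖^2 ≤ 2^(n - k + (j:ℕ)) * ‖gramSchmidt ℝ d' j‖^2 := by
    intro j
    have h1 := gso_sq_lower hn b hred (t j)
    have h4 : (2:ℝ)^((t j:ℕ)) ≤ 2^(n - k + (j:ℕ)) :=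
      pow_le_pow_right₀ (by norm_num) (htj j)
    calc ‖b ⟨0,hn⟩‖^2 ≤ 2^((t j:ℕ)) * ‖gso b (t j)‖^2 := h1
      _ ≤ 2^((t j:ℕ)) * ‖gramSchmidt ℝ d' j‖^2 := by
          apply mul_le_mul_of_nonneg_left _ (by positivity)
          have h5 : ‖gso b (t j)‖ ≤ ‖gramSchmidt ℝ d' j‖ := by
            rw [gso_eq]; exact hgs_lb j
          exact pow_le_pow_left₀ (norm_nonneg _) h5 2
      _ ≤ 2^(n-k+(j:ℕ)) * ‖gramSchmidt ℝ d' j‖^2 :=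
          mul_le_mul_of_nonneg_right h4 (sq_nonneg _)
  set Sn := ∑ j : Fin k, (n - k + (j:ℕ)) with hSn
  have hprod : ‖b ⟨0,hn⟩‖^(2*k) ≤ 2^Sn * latticeDet d ^ 2 := by
    have h1 : ‖b ⟨0,hn⟩‖^(2*k) = ∏ _j : Fin k, ‖b ⟨0,hn⟩‖^2 := by
      rw [Finset.prod_const, Finset.card_univ, Fintype.card_fin, ← pow_mul, mul_comm]
    rw [h1, hD2]
    calc ∏ _j : Fin k, ‖b ⟨0,hn⟩‖^2
        ≤ ∏ j : Fin k, (2^(n-k+(j:ℕ)) * ‖gramSchmidt ℝ d' j‖^2) :=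
          Finset.prod_le_prod (fun j _ => sq_nonneg _) (fun j _ => hstep j)
      _ = (∏ j : Fin k, (2:ℝ)^(n-k+(j:ℕ))) * ∏ j, ‖gramSchmidt ℝ d' j‖^2 :=
          Finset.prod_mul_distrib
      _ = 2^Sn * ∏ j, ‖gramSchmidt ℝ d' j‖^2 := by
          rw [Finset.prod_pow_eq_pow_sum, hSn]
  -- final real-power manipulations
  have hXnn : (0:ℝ) ≤ ‖b ⟨0,hn⟩‖ := norm_nonneg _
  have hkpos : (0:ℝ) < (k:ℝ) := by exact_mod_cast hk1
  have h2knz : (2*(k:ℝ)) ≠ 0 := by positivity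
  have hXeq : ‖b ⟨0,hn⟩‖ = (‖b ⟨0,hn⟩‖ ^ (2*k : ℕ)) ^ (1/(2*(k:ℝ))) := by
    rw [← Real.rpow_natCast ‖b ⟨0,hn⟩‖ (2*k), ← Real.rpow_mul hXnn]
    push_cast
    rw [mul_one_div, div_self h2knz, Real.rpow_one]
  have hmain : ‖b ⟨0,hn⟩‖ ≤ ((2:ℝ)^Sn * latticeDet d ^2) ^ (1/(2*(k:ℝ))) := by
    conv_lhs => rw [hXeq]
    exact Real.rpow_le_rpow (pow_nonneg hXnn _) hprod (by positivity)
  have hSnval : ((Sn:ℕ):ℝ) = (k:ℝ) * ((n:ℝ) - (k:ℝ)) + (k:ℝ)*((k:ℝ)-1)/2 := by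
    have h1 : ((Sn:ℕ):ℝ) = ∑ j : Fin k, (((n - k:ℕ):ℝ) + ((j:ℕ):ℝ)) := by
      rw [hSn]
      push_cast
      rfl
    have hsum_j : ∑ j : Fin k, ((j:ℕ):ℝ) = (k:ℝ)*((k:ℝ)-1)/2 := by
      have hnat := Finset.sum_range_id_mul_two k
      have heq : (∑ j : Fin k, ((j:ℕ):ℝ)) = ((∑ i ∈ Finset.range k, i : ℕ) : ℝ) := by
        push_cast
        rw [Fin.sum_univ_eq_sum_range (fun i => (i:ℝ)) k]
      have hc2 : ((∑ i ∈ Finset.range k, i : ℕ) : ℝ) * 2 = (k:ℝ) * ((k:ℝ)-1) := by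
        have h := congrArg (fun z : ℕ => (z:ℝ)) hnat
        push_cast [Nat.cast_sub hk1] at h
        push_cast
        linarith
      rw [heq]
      linarith
    rw [h1, Finset.sum_add_distrib, hsum_j, Finset.sum_const, Finset.card_univ,
      Fintype.card_fin]
    rw [Nat.cast_sub hkn]
    push_cast
    ring
  have hsplit : ((2:ℝ)^Sn * latticeDet d ^2) ^ (1/(2*(k:ℝ)))
      = 2 ^ ((((n:ℝ) - (k:ℝ))/2) + (((k:ℝ)-1)/4)) * latticeDet d ^ ((1:ℝ)/(k:ℝ)) := by
    rw [Real.mul_rpow (by positivity) (sq_nonneg _)]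
    congr 1
    · rw [← Real.rpow_natCast (2:ℝ) Sn, ← Real.rpow_mul (by norm_num)]
      congr 1
      rw [hSnval]
      field_simp
      ring
    · rw [← Real.rpow_natCast (latticeDet d) 2, ← Real.rpow_mul hDpos.le]
      congr 1
      push_cast
      field_simp
  calc ‖b ⟨0, hn⟩‖ ≤ ((2:ℝ)^Sn * latticeDet d ^2) ^ (1/(2*(k:ℝ))) := hmain
    _ = _ := hsplit
end

section
/- Let b₁,...,bₙ ∈ ℝ^m be an LLL-reduced basis of the lattice L, let 1 ≤ k ≤ n, and let d₁,...,d_k be arbitrary linearly independent vectors in L. Then ‖b₁‖·‖b₂‖⋯‖b_k‖ ≤ 2^{k(n−k)/2 + k(k−1)/4} · det L(d₁,...,d_k). -/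
open scoped BigOperators RealInnerProductSpace

namespace LLLAux

variable {m n k K : ℕ}

local notation "V" => EuclideanSpace ℝ (Fin m)

lemma gso_orth (f : Fin K → V) {i j : Fin K} (h : i ≠ j) : ⟪gso f i, gso f j⟫ = 0 := by
  haveI : WellFoundedLT (Fin K) := inferInstance
  exact InnerProductSpace.gramSchmidt_orthogonal ℝ f h

lemma gso_ne_zero {f : Fin K → V} (hf : LinearIndependent ℝ f) (i : Fin K) : gso f i ≠ 0 := by
  haveI : WellFoundedLT (Fin K) := inferInstance
  exact InnerProductSpace.gramSchmidt_ne_zero i hf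

lemma gso_expansion (f : Fin K → V) (i : Fin K) :
    f i = gso f i + ∑ l ∈ Finset.Iio i, mu f i l • gso f l := by
  haveI : WellFoundedLT (Fin K) := inferInstance
  have h := InnerProductSpace.gramSchmidt_def'' ℝ f i
  nth_rewrite 1 [h]
  congr 1
  refine Finset.sum_congr rfl fun l _ => ?_
  congr 1
  rw [mu, real_inner_comm, real_inner_self_eq_norm_sq]
  rfl

lemma inner_gso_self (f : Fin K → V) (i : Fin K) : ⟪f i, gso f i⟫ = ‖gso f i‖ ^ 2 := by
  conv_lhs => rw [gso_expansion f i]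
  rw [inner_add_left, sum_inner, real_inner_self_eq_norm_sq]
  have : ∀ l ∈ Finset.Iio i, ⟪mu f i l • gso f l, gso f i⟫ = 0 := by
    intro l hl
    rw [real_inner_smul_left, gso_orth f (Finset.mem_Iio.mp hl).ne, mul_zero]
  rw [Finset.sum_eq_zero this, add_zero]

lemma inner_gso_of_lt (f : Fin K → V) {i t : Fin K} (h : i < t) : ⟪f i, gso f t⟫ = 0 := by
  conv_lhs => rw [gso_expansion f i]
  rw [inner_add_left, gso_orth f h.ne]
  have : ∀ l ∈ Finset.Iio i, ⟪mu f i l • gso f l, gso f t⟫ = 0 := by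
    intro l hl
    rw [real_inner_smul_left, gso_orth f ((Finset.mem_Iio.mp hl).trans h).ne, mul_zero]
  rw [sum_inner, Finset.sum_eq_zero this, add_zero]

lemma norm_sum_sq_orth (s : Finset (Fin K)) (v : Fin K → V)
    (h : ∀ l ∈ s, ∀ l' ∈ s, l ≠ l' → ⟪v l, v l'⟫ = 0) :
    ‖∑ l ∈ s, v l‖ ^ 2 = ∑ l ∈ s, ‖v l‖ ^ 2 := by
  rw [← real_inner_self_eq_norm_sq, sum_inner]
  refine Finset.sum_congr rfl fun l hl => ?_
  rw [inner_sum, Finset.sum_eq_single l (fun l' hl' hne => h l hl l' hl' (Ne.symm hne))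
    (fun hni => absurd hl hni), real_inner_self_eq_norm_sq]

lemma det_gram_eq_prod (f : Fin K → V) (hf : LinearIndependent ℝ f) :
    (Matrix.of fun i j => (⟪f i, f j⟫ : ℝ)).det = ∏ l, ‖gso f l‖ ^ 2 := by
  classical
  set R : Matrix (Fin K) (Fin K) ℝ :=
    Matrix.of fun i l => if l = i then 1 else if l < i then mu f i l else 0 with hR
  have hexp : ∀ i, f i = ∑ l, R i l • gso f l := by
    intro i
    have h1 : ∀ l, R i l • gso f l =
        (if l = i then gso f i else 0) + (if l ∈ Finset.Iio i then mu f i l • gso f l else 0) := by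
      intro l
      by_cases h1 : l = i
      · subst h1; simp [hR]
      · simp only [hR, Matrix.of_apply, if_neg h1, Finset.mem_Iio]
        by_cases h2 : l < i <;> simp [h2]
    rw [Finset.sum_congr rfl fun l _ => h1 l, Finset.sum_add_distrib,
      Finset.sum_ite_eq' Finset.univ i, Finset.sum_ite_mem, Finset.univ_inter,
      if_pos (Finset.mem_univ i)]
    exact gso_expansion f i
  have hGram : (Matrix.of fun i j => (⟪f i, f j⟫ : ℝ)) =
      R * Matrix.diagonal (fun l => ‖gso f l‖ ^ 2) * R.transpose := by
    ext i j
    have : ⟪f i, f j⟫ = ∑ l, R i l * R j l * ‖gso f l‖ ^ 2 := by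
      conv_lhs => rw [hexp i, hexp j]
      rw [sum_inner]
      refine Finset.sum_congr rfl fun l _ => ?_
      rw [inner_sum, Finset.sum_eq_single l ?_ (fun hni => absurd (Finset.mem_univ l) hni)]
      · rw [real_inner_smul_left, real_inner_smul_right, real_inner_self_eq_norm_sq]; ring
      · intro l' _ hne
        rw [real_inner_smul_left, real_inner_smul_right, gso_orth f (Ne.symm hne)]
        ring
    rw [Matrix.of_apply, this, Matrix.mul_apply]
    refine Finset.sum_congr rfl fun l _ => ?_
    rw [Matrix.mul_diagonal, Matrix.transpose_apply]
    ring
  have hRdet : R.det = 1 := by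
    have htri : R.BlockTriangular OrderDual.toDual := by
      intro i l h
      have h' : i < l := h
      simp only [hR, Matrix.of_apply, if_neg (ne_of_gt h'), if_neg (asymm h')]
    rw [Matrix.det_of_lowerTriangular R htri]
    refine Finset.prod_eq_one fun i _ => by simp [hR]
  rw [hGram, Matrix.det_mul, Matrix.det_mul, Matrix.det_transpose, hRdet,
    Matrix.det_diagonal]
  ring

lemma latticeDet_eq_prod (f : Fin K → V) (hf : LinearIndependent ℝ f) :
    latticeDet f = ∏ l, ‖gso f l‖ := by
  rw [latticeDet, det_gram_eq_prod f hf, Finset.prod_pow]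
  exact Real.sqrt_sq (Finset.prod_nonneg fun l _ => norm_nonneg _)

lemma sum_Iio_fin (i : Fin K) (F : ℕ → ℝ) :
    ∑ l ∈ Finset.Iio i, F (l : ℕ) = ∑ s ∈ Finset.range (i : ℕ), F s := by
  refine Finset.sum_bij' (fun l _ => (l : ℕ)) (fun s hs => ⟨s, (Finset.mem_range.mp hs).trans i.isLt⟩)
    ?_ ?_ ?_ ?_ ?_
  · intro a ha; exact Finset.mem_range.mpr (Fin.lt_def.mp (Finset.mem_Iio.mp ha))
  · intro a ha; exact Finset.mem_Iio.mpr (Fin.lt_def.mpr (Finset.mem_range.mp ha))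
  · intro a _; rfl
  · intro a _; rfl
  · intro a _; rfl

section LLL

variable {b : Fin n → EuclideanSpace ℝ (Fin m)}

lemma gso_step (hred : LLLReduced b) {i j : Fin n} (h : (i : ℕ) + 1 = (j : ℕ)) :
    ‖gso b i‖ ^ 2 ≤ 2 * ‖gso b j‖ ^ 2 := by
  have hij : i < j := by rw [Fin.lt_def]; omega
  have h1 := hred.1 i j hij
  have h2 := hred.2 i j h
  have horth : ⟪gso b j, gso b i⟫ = 0 := gso_orth b hij.ne'
  have hexp : ‖gso b j + mu b j i • gso b i‖ ^ 2
      = ‖gso b j‖ ^ 2 + (mu b j i) ^ 2 * ‖gso b i‖ ^ 2 := by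
    rw [norm_add_sq_real, real_inner_smul_right, horth, mul_zero, norm_smul, mul_pow,
      Real.norm_eq_abs, sq_abs]
    ring
  have hmu := abs_le.mp h1
  have hmusq : mu b j i ^ 2 ≤ 1 / 4 := by nlinarith [hmu.1, hmu.2]
  nlinarith [sq_nonneg ‖gso b i‖, sq_nonneg ‖gso b j‖]

lemma gso_growth (hred : LLLReduced b) (s : ℕ) :
    ∀ i t : Fin n, (t : ℕ) = (i : ℕ) + s → ‖gso b i‖ ^ 2 ≤ 2 ^ s * ‖gso b t‖ ^ 2 := by
  induction s with
  | zero => intro i t h; have : i = t := Fin.ext (by omega); subst this; simp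
  | succ s IH =>
    intro i t h
    have hj : (i : ℕ) + s < n := by have := t.isLt; omega
    set j : Fin n := ⟨(i : ℕ) + s, hj⟩ with hjdef
    have h1 := IH i j rfl
    have h2 := gso_step hred (i := j) (j := t) (by simp [hjdef]; omega)
    have hp : (0:ℝ) ≤ 2 ^ s := by positivity
    calc ‖gso b i‖ ^ 2 ≤ 2 ^ s * ‖gso b j‖ ^ 2 := h1
      _ ≤ 2 ^ s * (2 * ‖gso b t‖ ^ 2) := by nlinarith
      _ = 2 ^ (s + 1) * ‖gso b t‖ ^ 2 := by ring

lemma gso_growth' (hred : LLLReduced b) {i t : Fin n} (h : i ≤ t) :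
    ‖gso b i‖ ^ 2 ≤ 2 ^ ((t : ℕ) - (i : ℕ)) * ‖gso b t‖ ^ 2 :=
  gso_growth hred ((t : ℕ) - (i : ℕ)) i t (by have := Fin.le_def.mp h; omega)

lemma norm_b_le (hred : LLLReduced b) (i : Fin n) :
    ‖b i‖ ^ 2 ≤ 2 ^ (i : ℕ) * ‖gso b i‖ ^ 2 := by
  have hpyth : ‖b i‖ ^ 2 = ‖gso b i‖ ^ 2 + ∑ l ∈ Finset.Iio i, (mu b i l) ^ 2 * ‖gso b l‖ ^ 2 := by
    conv_lhs => rw [gso_expansion b i]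
    rw [norm_add_sq_real]
    have hw0 : ⟪gso b i, ∑ l ∈ Finset.Iio i, mu b i l • gso b l⟫ = 0 := by
      rw [inner_sum]
      refine Finset.sum_eq_zero fun l hl => ?_
      rw [real_inner_smul_right, gso_orth b (Finset.mem_Iio.mp hl).ne', mul_zero]
    rw [hw0, mul_zero, add_zero, norm_sum_sq_orth]
    · congr 1
      refine Finset.sum_congr rfl fun l _ => ?_
      rw [norm_smul, mul_pow, Real.norm_eq_abs, sq_abs]
    · intro l hl l' hl' hne
      rw [real_inner_smul_left, real_inner_smul_right, gso_orth b hne, mul_zero, mul_zero]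
  by_cases h0 : (i : ℕ) = 0
  · have hempty : Finset.Iio i = ∅ := by
      refine Finset.eq_empty_of_forall_notMem fun l hl => ?_
      have := Fin.lt_def.mp (Finset.mem_Iio.mp hl); omega
    rw [hpyth, hempty, Finset.sum_empty, add_zero, h0, pow_zero, one_mul]
  · have hterm : ∀ l ∈ Finset.Iio i, (mu b i l) ^ 2 * ‖gso b l‖ ^ 2
        ≤ (1 / 4) * (2 ^ ((i : ℕ) - (l : ℕ)) * ‖gso b i‖ ^ 2) := by
      intro l hl
      have hli : l < i := Finset.mem_Iio.mp hl
      have hmu := abs_le.mp (hred.1 l i hli)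
      have h1 : (mu b i l) ^ 2 ≤ 1 / 4 := by nlinarith [hmu.1, hmu.2]
      have h2 : ‖gso b l‖ ^ 2 ≤ 2 ^ ((i : ℕ) - (l : ℕ)) * ‖gso b i‖ ^ 2 :=
        gso_growth' hred hli.le
      exact mul_le_mul h1 h2 (sq_nonneg _) (by norm_num)
    have hsum : ∑ l ∈ Finset.Iio i, (2:ℝ) ^ ((i : ℕ) - (l : ℕ)) ≤ 2 ^ ((i : ℕ) + 1) := by
      rw [sum_Iio_fin i (fun s => (2:ℝ) ^ ((i : ℕ) - s))]
      have : ∀ s ∈ Finset.range (i : ℕ), (2:ℝ) ^ ((i : ℕ) - s) = 2 ^ (i : ℕ) * (1/2) ^ s := by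
        intro s hs
        rw [pow_sub₀ (2:ℝ) (by norm_num) (Finset.mem_range.mp hs).le, one_div, inv_pow]
      rw [Finset.sum_congr rfl this, ← Finset.mul_sum]
      have hg := sum_geometric_two_le (i : ℕ)
      have hp : (0:ℝ) ≤ 2 ^ (i : ℕ) := by positivity
      calc (2:ℝ) ^ (i:ℕ) * ∑ s ∈ Finset.range (i:ℕ), (1/2:ℝ) ^ s
          ≤ 2 ^ (i:ℕ) * 2 := by nlinarith
        _ = 2 ^ ((i:ℕ) + 1) := by ring
    have hchain : ∑ l ∈ Finset.Iio i, (mu b i l) ^ 2 * ‖gso b l‖ ^ 2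
        ≤ (1/4) * ‖gso b i‖ ^ 2 * 2 ^ ((i:ℕ)+1) := by
      calc ∑ l ∈ Finset.Iio i, (mu b i l) ^ 2 * ‖gso b l‖ ^ 2
          ≤ ∑ l ∈ Finset.Iio i, (1/4) * (2 ^ ((i : ℕ) - (l : ℕ)) * ‖gso b i‖ ^ 2) :=
            Finset.sum_le_sum hterm
        _ = (1/4) * ‖gso b i‖ ^ 2 * ∑ l ∈ Finset.Iio i, (2:ℝ) ^ ((i : ℕ) - (l : ℕ)) := by
            rw [Finset.mul_sum]; exact Finset.sum_congr rfl fun l _ => by ring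
        _ ≤ (1/4) * ‖gso b i‖ ^ 2 * 2 ^ ((i:ℕ)+1) := by nlinarith [sq_nonneg ‖gso b i‖]
    have h2i : (2:ℝ) ≤ 2 ^ (i:ℕ) := by
      calc (2:ℝ) = 2 ^ 1 := (pow_one 2).symm
        _ ≤ 2 ^ (i:ℕ) := pow_le_pow_right₀ (by norm_num) (by omega)
    rw [hpyth]
    have hexp : (2:ℝ) ^ ((i:ℕ)+1) = 2 * 2 ^ (i:ℕ) := by rw [pow_succ]; ring
    nlinarith [sq_nonneg ‖gso b i‖]

end LLL

section Elem

variable (b : Fin n → EuclideanSpace ℝ (Fin m))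

/-- The family of lattice vectors with coefficient rows `c`. -/
noncomputable def eOf (c : Fin K → Fin n → ℤ) : Fin K → EuclideanSpace ℝ (Fin m) :=
  fun j => ∑ i, (c j i : ℝ) • b i

/-- The Gram matrix of a family. -/
noncomputable def gram (e : Fin K → EuclideanSpace ℝ (Fin m)) : Matrix (Fin K) (Fin K) ℝ :=
  Matrix.of fun i j => ⟪e i, e j⟫

/-- One elementary row operation on integer coefficient matrices. -/
def StepC (c c' : Fin K → Fin n → ℤ) : Prop :=
  (∃ j₀ j₁ : Fin K, c' = c ∘ Equiv.swap j₀ j₁) ∨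
  (∃ (j₁ j₂ : Fin K) (q : ℤ), j₁ ≠ j₂ ∧ c' = Function.update c j₁ (c j₁ - q • c j₂))

/-- A sequence of elementary row operations. -/
def ElemC : (Fin K → Fin n → ℤ) → (Fin K → Fin n → ℤ) → Prop :=
  Relation.ReflTransGen StepC

lemma eOf_swap (c : Fin K → Fin n → ℤ) (σ : Equiv.Perm (Fin K)) :
    eOf b (c ∘ σ) = eOf b c ∘ σ := rfl

lemma eOf_update (c : Fin K → Fin n → ℤ) (j₁ j₂ : Fin K) (q : ℤ) :
    eOf b (Function.update c j₁ (c j₁ - q • c j₂)) =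
      Function.update (eOf b c) j₁ (eOf b c j₁ - (q : ℝ) • eOf b c j₂) := by
  funext j
  by_cases h : j = j₁
  · rw [h]
    simp only [eOf, Function.update_self, Pi.sub_apply, Pi.smul_apply, smul_eq_mul]
    rw [Finset.smul_sum, ← Finset.sum_sub_distrib]
    refine Finset.sum_congr rfl fun i _ => ?_
    push_cast
    rw [sub_smul, smul_smul]
  · simp only [eOf, Function.update_of_ne h]

lemma gram_swap_det (e : Fin K → EuclideanSpace ℝ (Fin m)) (σ : Equiv.Perm (Fin K)) :
    (gram (e ∘ σ)).det = (gram e).det := by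
  have : gram (e ∘ σ) = (gram e).submatrix σ σ := rfl
  rw [this, Matrix.det_submatrix_equiv_self]

lemma gram_shear_det (e : Fin K → EuclideanSpace ℝ (Fin m)) {j₁ j₂ : Fin K} (h : j₁ ≠ j₂)
    (r : ℝ) :
    (gram (Function.update e j₁ (e j₁ - r • e j₂))).det = (gram e).det := by
  set G := gram e with hG
  set H := Matrix.updateRow G j₁ (G j₁ + (-r) • G j₂) with hH
  have hgram : gram (Function.update e j₁ (e j₁ - r • e j₂)) =
      Matrix.updateCol H j₁ (fun i => H i j₁ + (-r) • H i j₂) := by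
    ext i j
    simp only [gram, Matrix.of_apply, Matrix.updateCol_apply, hH, Matrix.updateRow_apply,
      hG, Pi.add_apply, Pi.smul_apply, smul_eq_mul, Function.update_apply]
    by_cases hi : i = j₁ <;> by_cases hj : j = j₁ <;>
      simp only [hi, hj, if_true, if_false, eq_self_iff_true] <;>
      simp only [inner_sub_left, inner_sub_right, real_inner_smul_left, real_inner_smul_right,
        Matrix.of_apply] <;> ring
  rw [hgram, Matrix.det_updateCol_add_smul_self H h (-r), hH,
    Matrix.det_updateRow_add_smul_self G h (-r)]

lemma linIndep_shear {e : Fin K → EuclideanSpace ℝ (Fin m)} {j₁ j₂ : Fin K} (hne : j₁ ≠ j₂)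
    (r : ℝ) (hli : LinearIndependent ℝ e) :
    LinearIndependent ℝ (Function.update e j₁ (e j₁ - r • e j₂)) := by
  rw [Fintype.linearIndependent_iff] at hli ⊢
  intro g hg
  set e' := Function.update e j₁ (e j₁ - r • e j₂) with he'
  set g'' := Function.update g j₂ (g j₂ - g j₁ * r) with hg''
  have hA : ∑ j, g j • e' j = (∑ j, g j • e j) - (g j₁ * r) • e j₂ := by
    have hfun : (fun j => g j • e' j) =
        Function.update (fun j => g j • e j) j₁ (g j₁ • (e j₁ - r • e j₂)) := by
      funext j
      by_cases hj : j = j₁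
      · subst hj; rw [Function.update_self, he', Function.update_self]
      · rw [Function.update_of_ne hj, he', Function.update_of_ne hj]
    rw [hfun, Finset.sum_update_of_mem (Finset.mem_univ j₁),
      Finset.sum_eq_sum_sdiff_singleton_add (Finset.mem_univ j₁) (fun j => g j • e j),
      smul_sub, smul_smul]
    abel
  have hB : ∑ j, g'' j • e j = (∑ j, g j • e j) - (g j₁ * r) • e j₂ := by
    have hfun : (fun j => g'' j • e j) =
        Function.update (fun j => g j • e j) j₂ ((g j₂ - g j₁ * r) • e j₂) := by
      funext j
      by_cases hj : j = j₂
      · subst hj; rw [hg'', Function.update_self, Function.update_self]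
      · rw [hg'', Function.update_of_ne hj, Function.update_of_ne hj]
    rw [hfun, Finset.sum_update_of_mem (Finset.mem_univ j₂),
      Finset.sum_eq_sum_sdiff_singleton_add (Finset.mem_univ j₂) (fun j => g j • e j),
      sub_smul]
    abel
  have hz := hli g'' (by rw [hB, ← hA, hg])
  have hz1 : g j₁ = 0 := by
    have h1 := hz j₁
    rwa [hg'', Function.update_of_ne hne] at h1
  intro j
  by_cases hj2 : j = j₂
  · have h2 := hz j₂
    rw [hg'', Function.update_self, hz1] at h2
    rw [hj2]
    linarith [h2]
  · by_cases hj1 : j = j₁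
    · rw [hj1]; exact hz1
    · have h3 := hz j
      rwa [hg'', Function.update_of_ne hj2] at h3

lemma step_det {c c' : Fin K → Fin n → ℤ} (h : StepC c c') :
    (gram (eOf b c')).det = (gram (eOf b c)).det := by
  rcases h with ⟨j₀, j₁, rfl⟩ | ⟨j₁, j₂, q, hne, rfl⟩
  · rw [eOf_swap]; exact gram_swap_det _ _
  · rw [eOf_update]; exact gram_shear_det _ hne _

lemma step_linIndep {c c' : Fin K → Fin n → ℤ} (h : StepC c c')
    (hli : LinearIndependent ℝ (eOf b c)) : LinearIndependent ℝ (eOf b c') := by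
  rcases h with ⟨j₀, j₁, rfl⟩ | ⟨j₁, j₂, q, hne, rfl⟩
  · rw [eOf_swap]; exact hli.comp _ (Equiv.injective _)
  · rw [eOf_update]; exact linIndep_shear hne _ hli

lemma step_zeroCol {c c' : Fin K → Fin n → ℤ} (h : StepC c c') (i : Fin n)
    (h0 : ∀ j, c j i = 0) : ∀ j, c' j i = 0 := by
  rcases h with ⟨j₀, j₁, rfl⟩ | ⟨j₁, j₂, q, hne, rfl⟩
  · intro j; exact h0 _
  · intro j
    by_cases hj : j = j₁
    · rw [hj, Function.update_self]
      simp [h0 j₁, h0 j₂]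
    · rw [Function.update_of_ne hj]; exact h0 j

lemma elem_det {c c' : Fin K → Fin n → ℤ} (h : ElemC c c') :
    (gram (eOf b c')).det = (gram (eOf b c)).det := by
  induction h with
  | refl => rfl
  | tail _ hstep ih => exact (step_det b hstep).trans ih

lemma elem_linIndep {c c' : Fin K → Fin n → ℤ} (h : ElemC c c')
    (hli : LinearIndependent ℝ (eOf b c)) : LinearIndependent ℝ (eOf b c') := by
  induction h with
  | refl => exact hli
  | tail _ hstep ih => exact step_linIndep b hstep ih

lemma elem_zeroCol {c c' : Fin K → Fin n → ℤ} (h : ElemC c c') (i : Fin n)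
    (h0 : ∀ j, c j i = 0) : ∀ j, c' j i = 0 := by
  induction h with
  | refl => exact h0
  | tail _ hstep ih => exact step_zeroCol hstep i ih

lemma step_snoc {c c' : Fin K → Fin n → ℤ} (x : Fin n → ℤ) (h : StepC c c') :
    StepC (Fin.snoc c x) (Fin.snoc c' x) := by
  rcases h with ⟨j₀, j₁, rfl⟩ | ⟨j₁, j₂, q, hne, rfl⟩
  · left
    refine ⟨j₀.castSucc, j₁.castSucc, ?_⟩
    have hsw : ∀ i : Fin K, Equiv.swap j₀.castSucc j₁.castSucc i.castSucc
        = (Equiv.swap j₀ j₁ i).castSucc := by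
      intro i
      rcases eq_or_ne i j₀ with rfl | h0
      · simp
      · rcases eq_or_ne i j₁ with rfl | h1
        · simp
        · rw [Equiv.swap_apply_of_ne_of_ne (by simpa [Fin.castSucc_inj] using h0)
            (by simpa [Fin.castSucc_inj] using h1), Equiv.swap_apply_of_ne_of_ne h0 h1]
    funext j
    refine Fin.lastCases ?_ (fun i => ?_) j
    · rw [Fin.snoc_last, Function.comp_apply,
        Equiv.swap_apply_of_ne_of_ne (Fin.castSucc_lt_last j₀).ne' (Fin.castSucc_lt_last j₁).ne',
        Fin.snoc_last]
    · simp only [Fin.snoc_castSucc, Function.comp_apply, hsw]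
  · right
    refine ⟨j₁.castSucc, j₂.castSucc, q, by simpa [Fin.castSucc_inj] using hne, ?_⟩
    funext j
    refine Fin.lastCases ?_ (fun i => ?_) j
    · rw [Fin.snoc_last, Function.update_of_ne (Fin.castSucc_lt_last j₁).ne', Fin.snoc_last]
    · rw [Fin.snoc_castSucc]
      by_cases hj : i = j₁
      · subst hj
        rw [Function.update_self, Function.update_self, Fin.snoc_castSucc, Fin.snoc_castSucc]
      · rw [Function.update_of_ne hj, Function.update_of_ne (by simpa [Fin.castSucc_inj] using hj),
          Fin.snoc_castSucc]

lemma elem_snoc {c c' : Fin K → Fin n → ℤ} (x : Fin n → ℤ) (h : ElemC c c') :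
    ElemC (Fin.snoc c x) (Fin.snoc c' x) := by
  induction h with
  | refl => exact Relation.ReflTransGen.refl
  | tail _ hstep ih => exact ih.tail (step_snoc x hstep)

end Elem

section HNF

variable (b : Fin n → EuclideanSpace ℝ (Fin m))

lemma row_nonzero {c : Fin K → Fin n → ℤ} (hli : LinearIndependent ℝ (eOf b c)) (j : Fin K) :
    ∃ i, c j i ≠ 0 := by
  by_contra hcon
  push_neg at hcon
  exact hli.ne_zero j (by simp [eOf, hcon])

/-- Columns containing a nonzero entry. -/
def colSet (c : Fin K → Fin n → ℤ) : Finset (Fin n) :=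
  Finset.univ.filter fun i => ∃ j, c j i ≠ 0

/-- Termination measure: sum of absolute values in the top nonzero column. -/
noncomputable def meas (c : Fin K → Fin n → ℤ) : ℕ :=
  if h : (colSet c).Nonempty then ∑ j, (c j ((colSet c).max' h)).natAbs else 0

lemma int_emod_natAbs_lt (a bb : ℤ) (hb : bb ≠ 0) : (a % bb).natAbs < bb.natAbs := by
  have h1 : 0 ≤ a % bb := Int.emod_nonneg a hb
  have h2 : a % bb < (bb.natAbs : ℤ) := by
    rcases hb.lt_or_gt with hneg | hpos
    · have h := Int.emod_lt_of_pos a (show 0 < -bb by omega)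
      rw [Int.emod_neg] at h; omega
    · have h := Int.emod_lt_of_pos a hpos; omega
  omega

lemma elim_aux : ∀ (N : ℕ) (c : Fin (K + 1) → Fin n → ℤ), meas c ≤ N →
    LinearIndependent ℝ (eOf b c) →
    ∃ c', ElemC c c' ∧ ∃ T : Fin n, c' (Fin.last K) T ≠ 0 ∧
      (∀ j i, T < i → c' j i = 0) ∧ (∀ j, j ≠ Fin.last K → c' j T = 0) := by
  intro N
  induction N with
  | zero =>
    intro c hm hli
    exfalso
    have hne : (colSet c).Nonempty := by
      obtain ⟨i, hi⟩ := row_nonzero b hli (Fin.last K)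
      have hmem : i ∈ colSet c := by
        simp only [colSet, Finset.mem_filter, Finset.mem_univ, true_and]
        exact ⟨_, hi⟩
      exact ⟨i, hmem⟩
    have hTmem : ∃ j, c j ((colSet c).max' hne) ≠ 0 := by
      have := (colSet c).max'_mem hne
      simpa [colSet] using this
    obtain ⟨j0, hj0⟩ := hTmem
    have hmeas : meas c = ∑ j, (c j ((colSet c).max' hne)).natAbs := by rw [meas, dif_pos hne]
    have hge : (c j0 ((colSet c).max' hne)).natAbs
        ≤ ∑ j, (c j ((colSet c).max' hne)).natAbs :=
      Finset.single_le_sum (f := fun j => (c j ((colSet c).max' hne)).natAbs)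
        (fun j _ => Nat.zero_le _) (Finset.mem_univ j0)
    have : (c j0 ((colSet c).max' hne)).natAbs ≠ 0 := Int.natAbs_ne_zero.mpr hj0
    omega
  | succ N IH =>
    intro c hm hli
    have hne : (colSet c).Nonempty := by
      obtain ⟨i, hi⟩ := row_nonzero b hli (Fin.last K)
      have hmem : i ∈ colSet c := by
        simp only [colSet, Finset.mem_filter, Finset.mem_univ, true_and]
        exact ⟨_, hi⟩
      exact ⟨i, hmem⟩
    set T := (colSet c).max' hne with hT
    have hTmem : ∃ j, c j T ≠ 0 := by
      have := (colSet c).max'_mem hne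
      exact (Finset.mem_filter.mp this).2
    have hTtop : ∀ i : Fin n, T < i → ∀ j, c j i = 0 := by
      intro i hi j
      by_contra hcon
      have hmem : i ∈ colSet c := by
        simp only [colSet, Finset.mem_filter, Finset.mem_univ, true_and]
        exact ⟨j, hcon⟩
      exact absurd (Finset.le_max' _ i hmem) (not_le.mpr hi)
    have hmeas : meas c = ∑ j, (c j T).natAbs := by rw [meas, dif_pos hne]
    obtain ⟨j₀, hj₀⟩ := hTmem
    by_cases huniq : ∀ j, c j T ≠ 0 → j = j₀
    · refine ⟨c ∘ Equiv.swap j₀ (Fin.last K),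
        Relation.ReflTransGen.single (Or.inl ⟨j₀, Fin.last K, rfl⟩), T, ?_, ?_, ?_⟩
      · simpa [Equiv.swap_apply_right] using hj₀
      · intro j i hi; exact hTtop i hi _
      · intro j hj
        by_contra hcon
        have heq := huniq _ hcon
        have : j = Fin.last K := by
          have h2 := congrArg (Equiv.swap j₀ (Fin.last K)) heq
          rw [Equiv.swap_apply_self, Equiv.swap_apply_left] at h2
          exact h2
        exact hj this
    · push_neg at huniq
      obtain ⟨j', hj'0, hj'ne⟩ := huniq
      obtain ⟨a, ba, hab, ha0, hb0, hle⟩ : ∃ a ba : Fin (K + 1), a ≠ ba ∧ c a T ≠ 0 ∧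
          c ba T ≠ 0 ∧ (c ba T).natAbs ≤ (c a T).natAbs := by
        rcases le_total (c j' T).natAbs (c j₀ T).natAbs with h | h
        · exact ⟨j₀, j', fun hh => hj'ne hh.symm, hj₀, hj'0, h⟩
        · exact ⟨j', j₀, hj'ne, hj'0, hj₀, h⟩
      set q := c a T / c ba T with hq
      set c' := Function.update c a (c a - q • c ba) with hc'
      have hstep : StepC c c' := Or.inr ⟨a, ba, q, hab, hc'⟩
      have hlic' := step_linIndep b hstep hli
      have hval : c' a T = c a T % c ba T := by
        rw [hc', Function.update_self]
        simp only [Pi.sub_apply, Pi.smul_apply, smul_eq_mul]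
        rw [Int.emod_def, hq]
        ring
      have hrow : ∀ j, j ≠ a → c' j = c j := fun j hj => Function.update_of_ne hj _ _
      have hbT : c' ba T ≠ 0 := by rw [hrow ba (Ne.symm hab)]; exact hb0
      have hne' : (colSet c').Nonempty := by
        have hmem : T ∈ colSet c' := by
          simp only [colSet, Finset.mem_filter, Finset.mem_univ, true_and]
          exact ⟨ba, hbT⟩
        exact ⟨T, hmem⟩
      have hTtop' : ∀ i : Fin n, T < i → ∀ j, c' j i = 0 := by
        intro i hi j
        by_cases hj : j = a
        · rw [hj, hc', Function.update_self]
          simp [hTtop i hi a, hTtop i hi ba]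
        · rw [hrow j hj]; exact hTtop i hi j
      have hmax' : (colSet c').max' hne' = T := by
        apply le_antisymm
        · apply Finset.max'_le
          intro y hy
          simp only [colSet, Finset.mem_filter, Finset.mem_univ, true_and] at hy
          obtain ⟨j, hj⟩ := hy
          by_contra hlt
          push_neg at hlt
          exact hj (hTtop' y hlt j)
        · apply Finset.le_max'
          simp only [colSet, Finset.mem_filter, Finset.mem_univ, true_and]
          exact ⟨ba, hbT⟩
      have hmeas' : meas c' < meas c := by
        rw [meas, dif_pos hne', hmax', hmeas]
        rw [Finset.sum_eq_sum_sdiff_singleton_add (Finset.mem_univ a)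
            (fun j => (c' j T).natAbs),
          Finset.sum_eq_sum_sdiff_singleton_add (Finset.mem_univ a)
            (fun j => (c j T).natAbs)]
        have heq : ∑ j ∈ Finset.univ \ {a}, (c' j T).natAbs
            = ∑ j ∈ Finset.univ \ {a}, (c j T).natAbs := by
          refine Finset.sum_congr rfl fun j hj => ?_
          rw [hrow j (by simpa using (Finset.mem_sdiff.mp hj).2)]
        have hlt : (c' a T).natAbs < (c a T).natAbs := by
          rw [hval]; exact lt_of_lt_of_le (int_emod_natAbs_lt _ _ hb0) hle
        omega
      obtain ⟨c'', helem, hrest⟩ := IH c' (by omega) hlic'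
      exact ⟨c'', Relation.ReflTransGen.head hstep helem, hrest⟩

lemma hnf_aux : ∀ (K : ℕ) (c : Fin K → Fin n → ℤ), LinearIndependent ℝ (eOf b c) →
    ∃ (c' : Fin K → Fin n → ℤ) (t : Fin K → Fin n), ElemC c c' ∧ StrictMono t ∧
      (∀ j, c' j (t j) ≠ 0) ∧ (∀ j i, t j < i → c' j i = 0) := by
  intro K
  induction K with
  | zero =>
    intro c _
    exact ⟨c, Fin.elim0, Relation.ReflTransGen.refl, fun a => a.elim0,
      fun j => j.elim0, fun j => j.elim0⟩
  | succ K IH =>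
    intro c hli
    obtain ⟨c₂, helem2, T, hlast, htop, hothers⟩ := elim_aux b (meas c) c le_rfl hli
    have hli2 := elem_linIndep b helem2 hli
    set c₃ : Fin K → Fin n → ℤ := fun j => c₂ j.castSucc with hc₃
    have hli3 : LinearIndependent ℝ (eOf b c₃) := by
      have heq : eOf b c₃ = eOf b c₂ ∘ Fin.castSucc := rfl
      rw [heq]
      exact hli2.comp _ (Fin.castSucc_injective K)
    obtain ⟨c₄, t₄, helem4, hmono4, hpiv4, htop4⟩ := IH c₃ hli3
    have hzero3 : ∀ i : Fin n, T ≤ i → ∀ j, c₃ j i = 0 := by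
      intro i hi j
      rcases eq_or_lt_of_le hi with rfl | hlt
      · exact hothers _ (Fin.castSucc_lt_last j).ne
      · exact htop _ i hlt
    have hzero4 : ∀ i : Fin n, T ≤ i → ∀ j, c₄ j i = 0 := fun i hi =>
      elem_zeroCol helem4 i (hzero3 i hi)
    have ht4T : ∀ j, t₄ j < T := by
      intro j
      by_contra hcon
      push_neg at hcon
      exact hpiv4 j (hzero4 _ hcon j)
    have hsplit : c₂ = Fin.snoc c₃ (c₂ (Fin.last K)) := by
      funext j
      refine Fin.lastCases ?_ (fun i => ?_) j
      · rw [Fin.snoc_last]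
      · rw [Fin.snoc_castSucc]
    refine ⟨Fin.snoc c₄ (c₂ (Fin.last K)), Fin.snoc t₄ T, ?_, ?_, ?_, ?_⟩
    · refine helem2.trans ?_
      have h5 := elem_snoc (c₂ (Fin.last K)) helem4
      rwa [← hsplit] at h5
    · intro x y hxy
      revert hxy
      refine Fin.lastCases ?_ (fun iy => ?_) y
      · intro hxy
        have hx : x ≠ Fin.last K := Fin.ne_last_of_lt hxy
        obtain ⟨ix, rfl⟩ := Fin.eq_castSucc_of_ne_last hx
        rw [Fin.snoc_castSucc, Fin.snoc_last]
        exact ht4T ix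
      · intro hxy'
        have hx : x ≠ Fin.last K := Fin.ne_last_of_lt (hxy'.trans (Fin.castSucc_lt_last iy))
        obtain ⟨ix, rfl⟩ := Fin.eq_castSucc_of_ne_last hx
        rw [Fin.snoc_castSucc, Fin.snoc_castSucc]
        exact hmono4 (Fin.castSucc_lt_castSucc_iff.mp hxy')
    · intro j
      refine Fin.lastCases ?_ (fun i => ?_) j
      · rw [Fin.snoc_last, Fin.snoc_last]; exact hlast
      · rw [Fin.snoc_castSucc, Fin.snoc_castSucc]; exact hpiv4 i
    · intro j
      refine Fin.lastCases ?_ (fun jj => ?_) j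
      · rw [Fin.snoc_last, Fin.snoc_last]
        intro i hi
        exact htop _ i hi
      · rw [Fin.snoc_castSucc, Fin.snoc_castSucc]
        intro i hi
        exact htop4 jj i hi

end HNF

lemma strictMono_val_le {t : Fin k → Fin n} (ht : StrictMono t) (j : Fin k) :
    (j : ℕ) ≤ (t j : ℕ) := by
  have key : ∀ r : ℕ, ∀ j : Fin k, (j : ℕ) = r → r ≤ (t j : ℕ) := by
    intro r
    induction r with
    | zero => intro j _; exact Nat.zero_le _
    | succ r IHr =>
      intro j hj
      have hr : r < k := by have := j.isLt; omega
      have h1 := IHr ⟨r, hr⟩ rfl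
      have h2 : t ⟨r, hr⟩ < t j := ht (show (⟨r, hr⟩ : Fin k) < j by rw [Fin.lt_def]; simp; omega)
      have h3 := Fin.lt_def.mp h2
      omega
  exact key _ j rfl

lemma strictMono_val_ub {t : Fin k → Fin n} (ht : StrictMono t) (j : Fin k) :
    (t j : ℕ) ≤ n - k + (j : ℕ) := by
  set t' : Fin k → Fin n := fun a => (t a.rev).rev with ht'def
  have ht' : StrictMono t' := by
    intro x y hxy
    exact Fin.rev_lt_rev.mpr (ht (Fin.rev_lt_rev.mpr hxy))
  have h := strictMono_val_le ht' j.rev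
  have h2 : t' j.rev = (t j).rev := by rw [ht'def]; simp
  rw [h2] at h
  have hv1 := Fin.val_rev j
  have hv2 := Fin.val_rev (t j)
  have hj := j.isLt
  have htj := (t j).isLt
  omega

lemma pivot_norm_le {b : Fin n → EuclideanSpace ℝ (Fin m)} (hb : LinearIndependent ℝ b)
    {c' : Fin k → Fin n → ℤ} {t : Fin k → Fin n}
    (hmono : StrictMono t) (hpiv : ∀ j, c' j (t j) ≠ 0)
    (htop : ∀ j i, t j < i → c' j i = 0) (i : Fin k) :
    ‖gso b (t i)‖ ≤ ‖gso (eOf b c') i‖ := by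
  set e' := eOf b c' with he'
  set v := gso b (t i) with hv
  have hbv : ∀ l : Fin n, l < t i → ⟪b l, v⟫ = 0 := fun l hl => inner_gso_of_lt b hl
  have hev : ∀ j' : Fin k, j' < i → ⟪e' j', v⟫ = 0 := by
    intro j' hj'
    rw [show e' j' = ∑ l, (c' j' l : ℝ) • b l from rfl, sum_inner]
    refine Finset.sum_eq_zero fun l _ => ?_
    rw [real_inner_smul_left]
    by_cases hl : t j' < l
    · rw [htop j' l hl]; simp
    · push_neg at hl
      rw [hbv l (lt_of_le_of_lt hl (hmono hj')), mul_zero]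
  have hei : ⟪e' i, v⟫ = (c' i (t i) : ℝ) * ‖v‖ ^ 2 := by
    rw [show e' i = ∑ l, (c' i l : ℝ) • b l from rfl, sum_inner]
    rw [Finset.sum_eq_single (t i)]
    · rw [real_inner_smul_left, hv, inner_gso_self]
    · intro l _ hlne
      rw [real_inner_smul_left]
      rcases lt_or_gt_of_ne hlne with hlt | hgt
      · rw [hbv l hlt, mul_zero]
      · rw [htop i l hgt]; simp
    · intro h; exact absurd (Finset.mem_univ _) h
  have hglv : ∀ l : Fin k, l < i → ⟪gso e' l, v⟫ = 0 := by
    intro l hl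
    have hmem : gso e' l ∈ Submodule.span ℝ (e' '' Set.Iic l) := by
      haveI : WellFoundedLT (Fin k) := inferInstance
      exact InnerProductSpace.gramSchmidt_mem_span ℝ e' le_rfl
    refine Submodule.span_induction ?_ ?_ ?_ ?_ hmem
    · rintro x ⟨j', hj', rfl⟩
      exact hev j' (lt_of_le_of_lt hj' hl)
    · exact inner_zero_left v
    · intro x y _ _ hx hy; rw [inner_add_left, hx, hy, add_zero]
    · intro r x _ hx; rw [real_inner_smul_left, hx, mul_zero]
  have hg'v : ⟪gso e' i, v⟫ = ⟪e' i, v⟫ := by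
    have hexp : ⟪e' i, v⟫ = ⟪gso e' i, v⟫
        + ∑ l ∈ Finset.Iio i, mu e' i l * ⟪gso e' l, v⟫ := by
      conv_lhs => rw [gso_expansion e' i]
      rw [inner_add_left, sum_inner]
      congr 1
      exact Finset.sum_congr rfl fun l _ => real_inner_smul_left _ _ _
    rw [Finset.sum_eq_zero (fun l hl => by
      rw [hglv l (Finset.mem_Iio.mp hl), mul_zero]), add_zero] at hexp
    exact hexp.symm
  have hvpos : 0 < ‖v‖ := norm_pos_iff.mpr (gso_ne_zero hb (t i))
  have h1 : (1 : ℝ) ≤ |(c' i (t i) : ℝ)| := by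
    rw [← Int.cast_abs]
    exact_mod_cast Int.one_le_abs (hpiv i)
  have habs : ‖v‖ ^ 2 ≤ |⟪gso e' i, v⟫| := by
    rw [hg'v, hei, abs_mul, abs_of_nonneg (sq_nonneg ‖v‖)]
    nlinarith [sq_nonneg ‖v‖]
  have hcs := abs_real_inner_le_norm (gso e' i) v
  nlinarith [hvpos]

end LLLAux

theorem prod_norm_le_sublattice_det {m n k : ℕ} (hk1 : 1 ≤ k) (hkn : k ≤ n)
    (b : Fin n → EuclideanSpace ℝ (Fin m))
    (hb : LinearIndependent ℝ b) (hred : LLLReduced b)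
    (d : Fin k → EuclideanSpace ℝ (Fin m))
    (hd : LinearIndependent ℝ d) (hdL : ∀ i, inLattice b (d i)) :
    ∏ i : Fin k, ‖b (Fin.castLE hkn i)‖ ≤
      2 ^ ((k : ℝ) * ((n : ℝ) - k) / 2 + (k : ℝ) * ((k : ℝ) - 1) / 4) * latticeDet d := by
  classical
  set c₀ : Fin k → Fin n → ℤ := fun j => (hdL j).choose with hc₀
  have hd_eq : d = LLLAux.eOf b c₀ := funext fun j => (hdL j).choose_spec
  have hd' : LinearIndependent ℝ (LLLAux.eOf b c₀) := hd_eq ▸ hd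
  obtain ⟨c', t, helem, hmono, hpiv, htop⟩ := LLLAux.hnf_aux b k c₀ hd'
  have hli' := LLLAux.elem_linIndep b helem hd'
  set e' := LLLAux.eOf b c' with he'
  have hdet : latticeDet d = ∏ l, ‖gso e' l‖ := by
    have h2 : (LLLAux.gram e').det = ∏ l, ‖gso e' l‖ ^ 2 := LLLAux.det_gram_eq_prod e' hli'
    have h3 : latticeDet d = Real.sqrt ((LLLAux.gram (LLLAux.eOf b c₀)).det) := by
      rw [hd_eq]; rfl
    rw [h3, ← LLLAux.elem_det b helem, h2, Finset.prod_pow]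
    exact Real.sqrt_sq (Finset.prod_nonneg fun l _ => norm_nonneg _)
  have hfac : ∀ i : Fin k, ‖b (Fin.castLE hkn i)‖
      ≤ (2:ℝ) ^ (((((n - k) + (i : ℕ) : ℕ)) : ℝ) / 2) * ‖gso e' i‖ := by
    intro i
    have hval : ((Fin.castLE hkn i : Fin n) : ℕ) = (i : ℕ) := rfl
    have hle : (Fin.castLE hkn i : Fin n) ≤ t i := by
      rw [Fin.le_def, hval]; exact LLLAux.strictMono_val_le hmono i
    have h1 := LLLAux.norm_b_le hred (Fin.castLE hkn i)
    have h2 := LLLAux.gso_growth' hred hle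
    have h3 := LLLAux.pivot_norm_le hb hmono hpiv htop i
    have hub := LLLAux.strictMono_val_ub hmono i
    have hlb := LLLAux.strictMono_val_le hmono i
    have hexp : ((Fin.castLE hkn i : Fin n) : ℕ)
        + ((t i : ℕ) - ((Fin.castLE hkn i : Fin n) : ℕ)) ≤ (n - k) + (i : ℕ) := by
      rw [hval]; omega
    have hsq : ‖b (Fin.castLE hkn i)‖ ^ 2 ≤ 2 ^ ((n - k) + (i : ℕ)) * ‖gso e' i‖ ^ 2 := by
      have e3 : ‖gso b (t i)‖ ^ 2 ≤ ‖gso e' i‖ ^ 2 := by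
        nlinarith [norm_nonneg (gso b (t i)), norm_nonneg (gso e' i)]
      have p1 : (0:ℝ) ≤ 2 ^ ((Fin.castLE hkn i : Fin n) : ℕ) := by positivity
      calc ‖b (Fin.castLE hkn i)‖ ^ 2
          ≤ 2 ^ ((Fin.castLE hkn i : Fin n) : ℕ) * ‖gso b (Fin.castLE hkn i)‖ ^ 2 := h1
        _ ≤ 2 ^ ((Fin.castLE hkn i : Fin n) : ℕ)
            * (2 ^ ((t i : ℕ) - ((Fin.castLE hkn i : Fin n) : ℕ)) * ‖gso b (t i)‖ ^ 2) :=
            mul_le_mul_of_nonneg_left h2 p1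
        _ = 2 ^ (((Fin.castLE hkn i : Fin n) : ℕ)
            + ((t i : ℕ) - ((Fin.castLE hkn i : Fin n) : ℕ))) * ‖gso b (t i)‖ ^ 2 := by
            rw [pow_add]; ring
        _ ≤ 2 ^ ((n - k) + (i : ℕ)) * ‖gso b (t i)‖ ^ 2 :=
            mul_le_mul_of_nonneg_right (pow_le_pow_right₀ one_le_two hexp) (sq_nonneg _)
        _ ≤ 2 ^ ((n - k) + (i : ℕ)) * ‖gso e' i‖ ^ 2 :=
            mul_le_mul_of_nonneg_left e3 (by positivity)
    have hs := Real.sqrt_le_sqrt hsq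
    rw [Real.sqrt_sq (norm_nonneg _)] at hs
    rw [Real.sqrt_mul (by positivity) _, Real.sqrt_sq (norm_nonneg _)] at hs
    have hsq2 : Real.sqrt ((2:ℝ) ^ ((n - k) + (i : ℕ)))
        = (2:ℝ) ^ (((((n - k) + (i : ℕ) : ℕ)) : ℝ) / 2) := by
      rw [Real.sqrt_eq_rpow, ← Real.rpow_natCast 2 ((n - k) + (i : ℕ)),
        ← Real.rpow_mul (by norm_num), mul_one_div]
    rw [hsq2] at hs
    exact hs
  have hprod := Finset.prod_le_prod (s := (Finset.univ : Finset (Fin k))) (fun i _ => norm_nonneg (b (Fin.castLE hkn i)))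
    (fun i _ => hfac i)
  rw [Finset.prod_mul_distrib] at hprod
  have hpow : ∏ i : Fin k, (2:ℝ) ^ (((((n - k) + (i : ℕ) : ℕ)) : ℝ) / 2)
      = 2 ^ ((k : ℝ) * ((n : ℝ) - k) / 2 + (k : ℝ) * ((k : ℝ) - 1) / 4) := by
    rw [← Real.rpow_sum_of_pos (by norm_num : (0:ℝ) < 2)]
    congr 1
    have hsum2 : ∑ i : Fin k, ((i : ℕ) : ℝ) = (k : ℝ) * ((k : ℝ) - 1) / 2 := by
      rw [Fin.sum_univ_eq_sum_range (fun i => (i : ℝ)) k]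
      have hn := Finset.sum_range_id_mul_two k
      have hcast := congrArg (Nat.cast : ℕ → ℝ) hn
      push_cast [Nat.cast_sub hk1] at hcast
      linarith
    have hsum1 : ∑ i : Fin k, (((((n - k) + (i : ℕ) : ℕ)) : ℝ) / 2)
        = ∑ i : Fin k, ((((n - k : ℕ) : ℝ)) / 2 + ((i : ℕ) : ℝ) / 2) := by
      refine Finset.sum_congr rfl fun i _ => ?_
      push_cast
      ring
    rw [hsum1, Finset.sum_add_distrib, Finset.sum_const, Finset.card_univ, Fintype.card_fin,
      ← Finset.sum_div, hsum2, nsmul_eq_mul, Nat.cast_sub hkn]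
    ring
  calc ∏ i : Fin k, ‖b (Fin.castLE hkn i)‖
      ≤ (∏ i : Fin k, (2:ℝ) ^ (((((n - k) + (i : ℕ) : ℕ)) : ℝ) / 2)) * ∏ i, ‖gso e' i‖ :=
        hprod
    _ = 2 ^ ((k : ℝ) * ((n : ℝ) - k) / 2 + (k : ℝ) * ((k : ℝ) - 1) / 4) * latticeDet d := by
        rw [hpow, hdet]
end

section
/- Let b₁,...,bₙ ∈ ℝ^m be an LLL-reduced basis of the lattice L, and let 1 ≤ k ≤ n. Then ‖b₁‖·‖b₂‖⋯‖b_k‖ ≤ 2^{k(n−1)/4} · (det L)^{k/n}. -/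
open scoped BigOperators RealInnerProductSpace

section LLLAux

open Finset
open scoped Matrix

lemma gauss_real (n : ℕ) : (∑ i ∈ range n, (i:ℝ)) = n*(n-1)/2 := by
  induction n with
  | zero => simp
  | succ n ih => rw [Finset.sum_range_succ, ih]; push_cast; ring

lemma prod_rpow_two {s : Finset ℕ} (f : ℕ → ℝ) :
    ∏ i ∈ s, (2:ℝ) ^ (f i) = (2:ℝ) ^ (∑ i ∈ s, f i) := by
  classical
  induction s using Finset.cons_induction with
  | empty => simp
  | cons a s ha ih =>
    rw [Finset.prod_cons, Finset.sum_cons, ih, ← Real.rpow_add two_pos]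

lemma key_ineq (n k : ℕ) (hk1 : 1 ≤ k) (hkn : k ≤ n) (A B : ℕ → ℝ)
    (hA : ∀ j, j < n → 0 < A j) (hB : ∀ i, i < k → 0 ≤ B i)
    (h1 : ∀ i j, i ≤ j → j < n → A i ^ 2 ≤ 2 ^ (j - i) * A j ^ 2)
    (h2 : ∀ i, i < k → B i ^ 2 ≤ 2 ^ i * A i ^ 2) :
    ∏ i ∈ range k, B i ≤
      2 ^ ((k : ℝ) * ((n : ℝ) - 1) / 4) * (∏ j ∈ range n, A j) ^ ((k : ℝ) / n) := by
  have hn0 : 0 < n := lt_of_lt_of_le hk1 hkn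
  set P := ∏ i ∈ range k, B i with hP
  set Q := ∏ j ∈ range n, A j with hQ
  have hQpos : 0 < Q := Finset.prod_pos fun j hj => hA j (Finset.mem_range.mp hj)
  have hPnn : 0 ≤ P := Finset.prod_nonneg fun i hi => hB i (Finset.mem_range.mp hi)
  set R := 2 ^ ((k : ℝ) * ((n : ℝ) - 1) / 4) * Q ^ ((k : ℝ) / n) with hR
  have hRnn : 0 ≤ R := by positivity
  refine le_of_pow_le_pow_left₀ (n := 2*n) (by omega) hRnn ?_
  -- compute R ^ (2*n)
  have hRpow : R ^ (2*n) = 2 ^ ((n:ℝ) * k * ((n:ℝ) - 1) / 2) * Q ^ (2*k) := by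
    rw [hR, mul_pow]
    rw [← Real.rpow_natCast (2 ^ ((k : ℝ) * ((n : ℝ) - 1) / 4)) (2*n),
        ← Real.rpow_natCast (Q ^ ((k : ℝ) / n)) (2*n),
        ← Real.rpow_mul (by norm_num : (0:ℝ) ≤ 2),
        ← Real.rpow_mul hQpos.le]
    have e1 : (k : ℝ) * ((n : ℝ) - 1) / 4 * (2*n : ℕ) = (n:ℝ) * k * ((n:ℝ) - 1) / 2 := by
      push_cast; ring
    have e2 : (k : ℝ) / n * (2*n : ℕ) = (2*k : ℕ) := by
      push_cast
      field_simp
    rw [e1, e2, Real.rpow_natCast]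
  rw [hRpow]
  -- main chain
  have sqA : ∀ j, j ∈ range n → (0:ℝ) ≤ A j ^ 2 := fun j hj => sq_nonneg _
  -- step A
  have stepA : P ^ 2 ≤ 2 ^ ((∑ i ∈ range k, (i:ℝ))) * ∏ i ∈ range k, A i ^ 2 := by
    rw [hP, ← Finset.prod_pow]
    calc ∏ i ∈ range k, B i ^ 2 ≤ ∏ i ∈ range k, ((2:ℝ) ^ (i:ℝ) * A i ^ 2) := by
          apply Finset.prod_le_prod (fun i _ => sq_nonneg _)
          intro i hi
          have := h2 i (Finset.mem_range.mp hi)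
          rwa [← Real.rpow_natCast 2 i] at this
      _ = 2 ^ ((∑ i ∈ range k, (i:ℝ))) * ∏ i ∈ range k, A i ^ 2 := by
          rw [Finset.prod_mul_distrib, prod_rpow_two]
  -- step B
  have stepB : (∏ i ∈ range k, A i ^ 2) ^ (n - k) ≤
      2 ^ (∑ i ∈ range k, ∑ j ∈ Ico k n, ((j:ℝ) - i)) * (∏ j ∈ Ico k n, A j ^ 2) ^ k := by
    have card_Ico : (Ico k n).card = n - k := Nat.card_Ico k n
    calc (∏ i ∈ range k, A i ^ 2) ^ (n - k)
        = ∏ i ∈ range k, ∏ _j ∈ Ico k n, A i ^ 2 := by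
          rw [← Finset.prod_pow]
          exact Finset.prod_congr rfl fun i _ => by rw [Finset.prod_const, card_Ico]
      _ ≤ ∏ i ∈ range k, ∏ j ∈ Ico k n, ((2:ℝ) ^ ((j:ℝ) - i) * A j ^ 2) := by
          apply Finset.prod_le_prod
          · intro i _; exact Finset.prod_nonneg fun j _ => sq_nonneg _
          · intro i hi
            apply Finset.prod_le_prod (fun j _ => sq_nonneg _)
            intro j hj
            obtain ⟨hkj, hjn⟩ := Finset.mem_Ico.mp hj
            have hik : i < k := Finset.mem_range.mp hi
            have hij : i ≤ j := le_trans hik.le hkj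
            have := h1 i j hij hjn
            rwa [← Real.rpow_natCast 2 (j - i), Nat.cast_sub hij] at this
      _ = 2 ^ (∑ i ∈ range k, ∑ j ∈ Ico k n, ((j:ℝ) - i)) * (∏ j ∈ Ico k n, A j ^ 2) ^ k := by
          have : ∀ i, i ∈ range k → ∏ j ∈ Ico k n, ((2:ℝ) ^ ((j:ℝ) - i) * A j ^ 2)
              = 2 ^ (∑ j ∈ Ico k n, ((j:ℝ) - i)) * ∏ j ∈ Ico k n, A j ^ 2 := by
            intro i _
            rw [Finset.prod_mul_distrib, prod_rpow_two]
          rw [Finset.prod_congr rfl this, Finset.prod_mul_distrib, prod_rpow_two,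
            Finset.prod_const, Finset.card_range]
  -- arithmetic for exponents
  set sig := ∑ i ∈ range k, (i:ℝ) with hsig
  set S := ∑ i ∈ range k, ∑ j ∈ Ico k n, ((j:ℝ) - i) with hSdef
  have hIco : ∑ j ∈ Ico k n, (j:ℝ) = (n:ℝ)*((n:ℝ)-1)/2 - (k:ℝ)*((k:ℝ)-1)/2 := by
    rw [Finset.sum_Ico_eq_sub _ hkn, gauss_real, gauss_real]
  have hS : S = (k:ℝ)*((n:ℝ)*((n:ℝ)-1)/2 - (k:ℝ)*((k:ℝ)-1)/2) - ((n:ℝ)-(k:ℝ))*sig := by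
    have hrow : ∀ i ∈ range k, ∑ j ∈ Ico k n, ((j:ℝ) - i)
        = ((n:ℝ)*((n:ℝ)-1)/2 - (k:ℝ)*((k:ℝ)-1)/2) - ((n:ℝ)-(k:ℝ))*(i:ℝ) := by
      intro i _
      rw [Finset.sum_sub_distrib, hIco, Finset.sum_const, Nat.card_Ico, nsmul_eq_mul,
        Nat.cast_sub hkn]
    rw [hSdef, Finset.sum_congr rfl hrow, Finset.sum_sub_distrib, Finset.sum_const,
      Finset.card_range, ← Finset.mul_sum, nsmul_eq_mul, ← hsig]
  have hsigv : sig = (k:ℝ)*((k:ℝ)-1)/2 := gauss_real k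
  have hexp : (n:ℝ)*sig + S = (n:ℝ) * k * ((n:ℝ) - 1) / 2 := by
    rw [hS, hsigv]; ring
  -- assembly
  set PA := ∏ i ∈ range k, A i ^ 2 with hPA
  set PB := ∏ j ∈ Ico k n, A j ^ 2 with hPB
  have hPAnn : 0 ≤ PA := Finset.prod_nonneg fun i _ => sq_nonneg _
  have hPBnn : 0 ≤ PB := Finset.prod_nonneg fun j _ => sq_nonneg _
  have hQQ : PA * PB = Q ^ 2 := by
    rw [hPA, hPB, hQ, Finset.prod_range_mul_prod_Ico _ hkn, Finset.prod_pow]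
  have c2 : P^(2*n) ≤ ((2:ℝ)^sig * PA)^n := by
    rw [pow_mul]
    exact pow_le_pow_left₀ (sq_nonneg P) stepA n
  have c3 : ((2:ℝ)^sig * PA)^n = (2:ℝ)^((n:ℝ)*sig) * (PA^k * PA^(n-k)) := by
    rw [mul_pow, ← pow_add, Nat.add_sub_cancel' hkn,
      ← Real.rpow_natCast ((2:ℝ)^sig) n, ← Real.rpow_mul (by norm_num : (0:ℝ) ≤ 2),
      mul_comm sig (n:ℝ)]
  have c4 : (2:ℝ)^((n:ℝ)*sig) * (PA^k * PA^(n-k))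
      ≤ (2:ℝ)^((n:ℝ)*sig) * (PA^k * ((2:ℝ)^S * PB^k)) := by
    have h2p : (0:ℝ) ≤ (2:ℝ)^((n:ℝ)*sig) := (Real.rpow_pos_of_pos two_pos _).le
    have hPAk : (0:ℝ) ≤ PA^k := pow_nonneg hPAnn k
    exact mul_le_mul_of_nonneg_left (mul_le_mul_of_nonneg_left stepB hPAk) h2p
  have c5 : (2:ℝ)^((n:ℝ)*sig) * (PA^k * ((2:ℝ)^S * PB^k))
      = (2:ℝ)^((n:ℝ)*sig + S) * Q^(2*k) := by
    rw [Real.rpow_add two_pos, pow_mul, ← hQQ, mul_pow]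
    ring
  calc P^(2*n) ≤ ((2:ℝ)^sig * PA)^n := c2
    _ = _ := c3
    _ ≤ _ := c4
    _ = (2:ℝ)^((n:ℝ)*sig + S) * Q^(2*k) := c5
    _ = 2 ^ ((n:ℝ) * k * ((n:ℝ) - 1) / 2) * Q ^ (2*k) := by rw [hexp]

variable {m n : ℕ} (b : Fin n → EuclideanSpace ℝ (Fin m))

lemma gso_orth {i j : Fin n} (h : i ≠ j) : ⟪gso b i, gso b j⟫ = 0 := by
  haveI : WellFoundedLT (Fin n) := inferInstance
  exact InnerProductSpace.gramSchmidt_orthogonal ℝ b h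

lemma b_eq (i : Fin n) : b i = gso b i + ∑ j ∈ Finset.Iio i, mu b i j • gso b j := by
  haveI : WellFoundedLT (Fin n) := inferInstance
  conv_lhs => rw [InnerProductSpace.gramSchmidt_def'' ℝ b i]
  show _ = InnerProductSpace.gramSchmidt ℝ b i + _
  congr 1
  apply Finset.sum_congr rfl
  intro j _
  congr 1
  rw [mu, real_inner_comm, real_inner_self_eq_norm_sq]
  show _ = _ / (‖InnerProductSpace.gramSchmidt ℝ b j‖^2 : ℝ)
  norm_num
  rfl

lemma norm_b_sq (i : Fin n) :
    ‖b i‖^2 = ‖gso b i‖^2 + ∑ j ∈ Finset.Iio i, (mu b i j)^2 * ‖gso b j‖^2 := by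
  have horth : ⟪gso b i, ∑ j ∈ Finset.Iio i, mu b i j • gso b j⟫ = 0 := by
    rw [inner_sum]
    refine Finset.sum_eq_zero fun j hj => ?_
    rw [real_inner_smul_right, gso_orth b (Finset.mem_Iio.mp hj).ne', mul_zero]
  have hsum : ‖∑ j ∈ Finset.Iio i, mu b i j • gso b j‖^2
      = ∑ j ∈ Finset.Iio i, (mu b i j)^2 * ‖gso b j‖^2 := by
    rw [← real_inner_self_eq_norm_sq, sum_inner]
    refine Finset.sum_congr rfl fun j hj => ?_
    rw [real_inner_smul_left, inner_sum]
    rw [Finset.sum_eq_single j]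
    · rw [real_inner_smul_right, real_inner_self_eq_norm_sq]; ring
    · intro j' _ hj'
      rw [real_inner_smul_right, gso_orth b (Ne.symm hj'), mul_zero]
    · intro h; exact absurd hj h
  conv_lhs => rw [b_eq b i]
  rw [norm_add_sq_real, horth, hsum]; ring

lemma gso_pos (hb : LinearIndependent ℝ b) (i : Fin n) : 0 < ‖gso b i‖ := by
  haveI : WellFoundedLT (Fin n) := inferInstance
  have : gso b i ≠ 0 := InnerProductSpace.gramSchmidt_ne_zero i hb
  exact norm_pos_iff.mpr this

lemma mu_sq_le (hred : LLLReduced b) {i j : Fin n} (h : i < j) : (mu b j i)^2 ≤ 1/4 := by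
  have := hred.1 i j h
  nlinarith [abs_nonneg (mu b j i), sq_abs (mu b j i)]

lemma step (hred : LLLReduced b) {i j : Fin n} (h : (i:ℕ) + 1 = (j:ℕ)) :
    ‖gso b i‖^2 ≤ 2 * ‖gso b j‖^2 := by
  have h2 := hred.2 i j h
  have hij : i < j := by rw [Fin.lt_def]; omega
  have hmu : (mu b j i)^2 ≤ 1/4 := mu_sq_le b hred hij
  have hexp : ‖gso b j + mu b j i • gso b i‖^2
      = ‖gso b j‖^2 + (mu b j i)^2 * ‖gso b i‖^2 := by
    rw [norm_add_sq_real, real_inner_smul_right, gso_orth b hij.ne', norm_smul]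
    simp [mul_pow, sq_abs]
  rw [hexp] at h2
  nlinarith [sq_nonneg ‖gso b i‖]

lemma gso_sq_le (hred : LLLReduced b) {i j : Fin n} (h : i ≤ j) :
    ‖gso b i‖^2 ≤ 2^((j:ℕ) - (i:ℕ)) * ‖gso b j‖^2 := by
  obtain ⟨d, hd⟩ : ∃ d : ℕ, (i:ℕ) + d = (j:ℕ) := ⟨j - i, by omega⟩
  induction d generalizing j with
  | zero =>
    have : i = j := Fin.ext (by omega)
    subst this; simp
  | succ d ih =>
    have hjd : (i:ℕ) + d < n := by omega
    set j' : Fin n := ⟨(i:ℕ) + d, by omega⟩ with hj'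
    have hj'v : (j':ℕ) = (i:ℕ) + d := rfl
    have h1 : ‖gso b i‖^2 ≤ 2^((j':ℕ) - (i:ℕ)) * ‖gso b j'‖^2 :=
      ih (Fin.le_def.mpr (by omega)) (by omega)
    rw [show (j':ℕ) - (i:ℕ) = d by omega] at h1
    have h2 : ‖gso b j'‖^2 ≤ 2 * ‖gso b j‖^2 := step b hred (by omega)
    have he : (j:ℕ) - (i:ℕ) = d + 1 := by omega
    rw [he, pow_succ]
    calc ‖gso b i‖^2 ≤ 2^d * ‖gso b j'‖^2 := h1
      _ ≤ 2^d * (2 * ‖gso b j‖^2) := by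
          have : (0:ℝ) < 2^d := pow_pos zero_lt_two d
          nlinarith
      _ = 2^d * 2 * ‖gso b j‖^2 := by ring

lemma b_sq_le (hred : LLLReduced b) (i : Fin n) :
    ‖b i‖^2 ≤ 2^(i:ℕ) * ‖gso b i‖^2 := by
  rw [norm_b_sq]
  rcases Nat.eq_zero_or_pos (i:ℕ) with h0 | h1
  · have hemp : Finset.Iio i = ∅ :=
      Finset.eq_empty_of_forall_notMem fun j hj => by
        have := Finset.mem_Iio.mp hj
        rw [Fin.lt_def] at this; omega
    simp [hemp, h0]
  · have hterm : ∀ j ∈ Finset.Iio i,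
        (mu b i j)^2 * ‖gso b j‖^2 ≤ (1/4 * 2^(i:ℕ) * ‖gso b i‖^2) * (1/2)^(j:ℕ) := by
      intro j hj
      have hji : j < i := Finset.mem_Iio.mp hj
      have hmu := mu_sq_le b hred hji
      have hgso := gso_sq_le b hred hji.le
      have hpow : (2:ℝ)^((i:ℕ)-(j:ℕ)) = 2^(i:ℕ) * (1/2)^(j:ℕ) := by
        rw [pow_sub₀ (2:ℝ) two_ne_zero (by rw [Fin.lt_def] at hji; omega)]
        rw [div_pow, one_pow, div_eq_mul_inv, mul_comm ((2:ℝ)^(i:ℕ))]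
        ring
      rw [hpow] at hgso
      have h2 : (0:ℝ) ≤ ‖gso b j‖^2 := sq_nonneg _
      have h3 : (mu b i j)^2 * ‖gso b j‖^2 ≤ (1/4) * (2^(i:ℕ) * (1/2)^(j:ℕ) * ‖gso b i‖^2) := by
        have hmunn : (0:ℝ) ≤ (mu b i j)^2 := sq_nonneg _
        nlinarith
      linarith [h3]
    have hsum := Finset.sum_le_sum hterm
    rw [← Finset.mul_sum] at hsum
    have hgeo : ∑ j ∈ Finset.Iio i, ((1:ℝ)/2)^(j:ℕ) ≤ 2 := by
      calc ∑ j ∈ Finset.Iio i, ((1:ℝ)/2)^(j:ℕ)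
          ≤ ∑ j : Fin n, ((1:ℝ)/2)^(j:ℕ) :=
            Finset.sum_le_sum_of_subset_of_nonneg (Finset.subset_univ _)
              (fun j _ _ => by positivity)
        _ = ∑ j ∈ Finset.range n, ((1:ℝ)/2)^j := Fin.sum_univ_eq_sum_range _ n
        _ ≤ 2 := sum_geometric_two_le n
    have h2i : (2:ℝ) ≤ 2^(i:ℕ) := by
      calc (2:ℝ) = 2^1 := (pow_one 2).symm
        _ ≤ 2^(i:ℕ) := pow_le_pow_right₀ one_le_two h1
    have hc : (0:ℝ) ≤ 1/4 * 2^(i:ℕ) * ‖gso b i‖^2 := by positivity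
    nlinarith [sq_nonneg ‖gso b i‖, mul_le_mul_of_nonneg_left hgeo hc]

noncomputable def Tmat : Matrix (Fin n) (Fin n) ℝ :=
  Matrix.of fun i j => if i = j then 1 else if j < i then mu b i j else 0

lemma b_eq_sum (i : Fin n) : b i = ∑ j, Tmat b i j • gso b j := by
  rw [b_eq b i]
  rw [← Finset.sum_subset (Finset.subset_univ (Finset.Iic i))]
  · rw [← Finset.Iio_insert, Finset.sum_insert (Finset.notMem_Iio_self)]
    congr 1
    · simp [Tmat]
    · apply Finset.sum_congr rfl
      intro j hj
      have hji : j < i := Finset.mem_Iio.mp hj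
      simp [Tmat, hji.ne', hji]
  · intro j _ hj
    have : i < j := by simpa using hj
    simp [Tmat, this.ne, not_lt.mpr this.le]

lemma gram_eq : Matrix.of (fun i j => ⟪b i, b j⟫) =
    Tmat b * Matrix.diagonal (fun j => ‖gso b j‖^2) * (Tmat b)ᵀ := by
  ext i i'
  have hR : (Tmat b * Matrix.diagonal (fun j => ‖gso b j‖^2) * (Tmat b)ᵀ) i i'
      = ∑ j, Tmat b i j * ‖gso b j‖^2 * Tmat b i' j := by
    rw [Matrix.mul_apply]
    apply Finset.sum_congr rfl
    intro j _
    rw [Matrix.mul_apply, Finset.sum_eq_single j]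
    · rw [Matrix.diagonal_apply_eq, Matrix.transpose_apply]
    · intro l _ hl
      rw [Matrix.diagonal_apply_ne _ hl, mul_zero]
    · intro h; exact absurd (Finset.mem_univ j) h
  have hL : ⟪b i, b i'⟫ = ∑ j, Tmat b i j * ‖gso b j‖^2 * Tmat b i' j := by
    conv_lhs => rw [b_eq_sum b i, b_eq_sum b i']
    rw [sum_inner]
    apply Finset.sum_congr rfl
    intro j _
    rw [real_inner_smul_left, inner_sum, Finset.sum_eq_single j]
    · rw [real_inner_smul_right, real_inner_self_eq_norm_sq]; ring
    · intro j' _ hj'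
      rw [real_inner_smul_right, gso_orth b (Ne.symm hj'), mul_zero]
    · intro h; exact absurd (Finset.mem_univ j) h
  rw [hR]
  exact hL

lemma det_gram : (Matrix.of (fun i j => ⟪b i, b j⟫)).det = ∏ j, ‖gso b j‖^2 := by
  rw [gram_eq b, Matrix.det_mul, Matrix.det_mul, Matrix.det_transpose, Matrix.det_diagonal]
  have hT : (Tmat b).det = 1 := by
    have hbt : (Tmat b).BlockTriangular OrderDual.toDual := by
      intro i j h
      have hij : i < j := h
      simp [Tmat, hij.ne, not_lt.mpr hij.le]
    rw [Matrix.det_of_lowerTriangular (Tmat b) hbt]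
    simp [Tmat]
  rw [hT]; ring

lemma latticeDet_eq : latticeDet b = ∏ j, ‖gso b j‖ := by
  rw [latticeDet, det_gram]
  rw [show (∏ j, ‖gso b j‖^2) = (∏ j, ‖gso b j‖)^2 by rw [Finset.prod_pow]]
  exact Real.sqrt_sq (Finset.prod_nonneg fun j _ => norm_nonneg _)

end LLLAux

theorem prod_norm_le_det_lattice {m n k : ℕ} (hk1 : 1 ≤ k) (hkn : k ≤ n)
    (b : Fin n → EuclideanSpace ℝ (Fin m))
    (hb : LinearIndependent ℝ b) (hred : LLLReduced b) :
    ∏ i : Fin k, ‖b (Fin.castLE hkn i)‖ ≤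
      2 ^ ((k : ℝ) * ((n : ℝ) - 1) / 4) * latticeDet b ^ ((k : ℝ) / n) := by
  haveI : WellFoundedLT (Fin n) := inferInstance
  classical
  set A : ℕ → ℝ := fun j => if h : j < n then ‖gso b ⟨j, h⟩‖ else 1 with hAdef
  set BB : ℕ → ℝ := fun i => if h : i < n then ‖b ⟨i, h⟩‖ else 1 with hBdef
  have hA : ∀ j, j < n → 0 < A j := by
    intro j hj
    simp only [hAdef, dif_pos hj]
    exact gso_pos b hb ⟨j, hj⟩
  have hBB : ∀ i, i < k → 0 ≤ BB i := by
    intro i hi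
    have hin : i < n := lt_of_lt_of_le hi hkn
    simp only [hBdef, dif_pos hin]
    exact norm_nonneg _
  have h1 : ∀ i j, i ≤ j → j < n → A i ^ 2 ≤ 2 ^ (j - i) * A j ^ 2 := by
    intro i j hij hjn
    have hin : i < n := lt_of_le_of_lt hij hjn
    simp only [hAdef, dif_pos hin, dif_pos hjn]
    exact gso_sq_le b hred (show (⟨i, hin⟩ : Fin n) ≤ ⟨j, hjn⟩ from hij)
  have h2 : ∀ i, i < k → BB i ^ 2 ≤ 2 ^ i * A i ^ 2 := by
    intro i hi
    have hin : i < n := lt_of_lt_of_le hi hkn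
    simp only [hAdef, hBdef, dif_pos hin]
    exact b_sq_le b hred ⟨i, hin⟩
  have hL : ∏ i : Fin k, ‖b (Fin.castLE hkn i)‖ = ∏ i ∈ Finset.range k, BB i := by
    rw [← Fin.prod_univ_eq_prod_range BB k]
    apply Finset.prod_congr rfl
    intro i _
    have hin : (i : ℕ) < n := lt_of_lt_of_le i.2 hkn
    simp only [hBdef, dif_pos hin]
    rfl
  have hD : latticeDet b = ∏ j ∈ Finset.range n, A j := by
    rw [latticeDet_eq b, ← Fin.prod_univ_eq_prod_range A n]
    apply Finset.prod_congr rfl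
    intro j _
    simp only [hAdef, dif_pos j.2]
  rw [hL, hD]
  exact key_ineq n k hk1 hkn A BB hA hBB h1 h2
end
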